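/- arXiv:1703.03092 — 6 statements merged into one kernel-verified Lean document; each statement's English description precedes it below -/
import Mathlib

section
/- For every nonnegative integer n, there exist integers a, b, c, d with a² + b² + c² + d² = n such that a + b + c + d is a perfect cube. -/
/-- `N` is a sum of three squares. -/
def Rep3 (N : ℤ) : Prop := ∃ x y z : ℤ, x^2 + y^2 + z^2 = N

lemma rep3_scale {N : ℤ} (h : Rep3 N) : Rep3 (4*N) := by
  obtain ⟨x, y, z, hxyz⟩ := h
  exact ⟨2*x, 2*y, 2*z, by ring_nf; linarith [hxyz]⟩

lemma sq_mod2 (x : ℤ) : x^2 % 2 = x % 2 := by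
  have h := Int.emod_two_eq x
  rcases h with h | h
  · obtain ⟨k, hk⟩ : ∃ k, x = 2*k := ⟨x/2, by omega⟩
    subst hk; have : (2*k)^2 = 2*(2*k^2) := by ring
    rw [this]; omega
  · obtain ⟨k, hk⟩ : ∃ k, x = 2*k+1 := ⟨x/2, by omega⟩
    subst hk; have : (2*k+1)^2 = 2*(2*k^2+2*k)+1 := by ring
    rw [this]; omega

lemma sq_mod8_odd {x : ℤ} (h : x % 2 = 1) : x^2 % 8 = 1 := by
  obtain ⟨k, hk⟩ : ∃ k, x = 2*k+1 := ⟨x/2, by omega⟩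
  obtain ⟨t, ht⟩ := Int.even_mul_succ_self k
  have hx : x^2 = 8*t+1 := by subst hk; linear_combination 4*ht
  omega

lemma sq_mod8_even {x : ℤ} (h : x % 2 = 0) : x^2 % 8 = 0 ∨ x^2 % 8 = 4 := by
  obtain ⟨k, hk⟩ : ∃ k, x = 2*k := ⟨x/2, by omega⟩
  rcases Int.emod_two_eq k with h2 | h2
  · left
    obtain ⟨j, hj⟩ : ∃ j, k = 2*j := ⟨k/2, by omega⟩
    have : x^2 = 8*(2*j^2) := by subst hk hj; ring
    omega
  · right
    have h8 := sq_mod8_odd h2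
    obtain ⟨s, hs⟩ : ∃ s, k^2 = 8*s+1 := ⟨k^2/8, by omega⟩
    have : x^2 = 8*(4*s)+4 := by subst hk; linear_combination 4*hs
    omega

/-- From a 3-square rep of even `u`, a 4-square rep of `u` with sum `0`. -/
lemma lemA {u : ℤ} (hu : u % 2 = 0) (h : Rep3 u) :
    ∃ a b c d : ℤ, a^2+b^2+c^2+d^2 = u ∧ a+b+c+d = 0 := by
  obtain ⟨x, y, z, hxyz⟩ := h
  have hpx := sq_mod2 x
  have hpy := sq_mod2 y
  have hpz := sq_mod2 z
  have hA : (x+y+z) % 2 = 0 := by omega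
  have hB : (x-y-z) % 2 = 0 := by omega
  have hC : (-x+y-z) % 2 = 0 := by omega
  have hD : (-x-y+z) % 2 = 0 := by omega
  refine ⟨(x+y+z)/2, (x-y-z)/2, (-x+y-z)/2, (-x-y+z)/2, ?_, ?_⟩
  · have e1 : 2*((x+y+z)/2) = x+y+z := by omega
    have e2 : 2*((x-y-z)/2) = x-y-z := by omega
    have e3 : 2*((-x+y-z)/2) = -x+y-z := by omega
    have e4 : 2*((-x-y+z)/2) = -x-y+z := by omega
    have key : 4*(((x+y+z)/2)^2 + ((x-y-z)/2)^2 + ((-x+y-z)/2)^2 + ((-x-y+z)/2)^2) = 4*u := by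
      linear_combination ((x+y+z)/2*2 + (x+y+z))*e1 + ((x-y-z)/2*2 + (x-y-z))*e2
        + ((-x+y-z)/2*2 + (-x+y-z))*e3 + ((-x-y+z)/2*2 + (-x-y+z))*e4 + 4*hxyz
    linarith [key]
  · omega

/-- From any 3-square rep of `u`, a 4-square rep of `4u+16` with sum `8`. -/
lemma lemB {u : ℤ} (h : Rep3 u) :
    ∃ a b c d : ℤ, a^2+b^2+c^2+d^2 = 4*u+16 ∧ a+b+c+d = 8 := by
  obtain ⟨x, y, z, hxyz⟩ := h
  exact ⟨x+y+z+2, x-y-z+2, -x+y-z+2, -x-y+z+2, by linear_combination 4*hxyz, by ring⟩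

/-- From a 3-square rep of `4n-1` (`n` odd), a 4-square rep of `n` with sum `1`. -/
lemma lemC {n u : ℤ} (hn : n % 2 = 1) (hu : u = 4*n - 1) (h : Rep3 u) :
    ∃ a b c d : ℤ, a^2+b^2+c^2+d^2 = n ∧ a+b+c+d = 1 := by
  obtain ⟨x₀, y, z, hxyz₀⟩ := h
  have hu8 : u % 8 = 3 := by omega
  -- all of x₀,y,z odd
  have hox : x₀ % 2 = 1 := by
    rcases Int.emod_two_eq x₀ with h2 | h2; swap; · exact h2
    exfalso
    rcases sq_mod8_even h2 with h8 | h8 <;>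
    · rcases Int.emod_two_eq y with hy | hy <;> rcases Int.emod_two_eq z with hz | hz <;>
      [ rcases sq_mod8_even hy with h8y | h8y <;> rcases sq_mod8_even hz with h8z | h8z;
        rcases sq_mod8_even hy with h8y | h8y <;> have h8z := sq_mod8_odd hz;
        have h8y := sq_mod8_odd hy <;> rcases sq_mod8_even hz with h8z | h8z;
        have h8y := sq_mod8_odd hy <;> have h8z := sq_mod8_odd hz ] <;> omega
  have hoy : y % 2 = 1 := by
    rcases Int.emod_two_eq y with h2 | h2; swap; · exact h2
    exfalso
    have h8x := sq_mod8_odd hox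
    rcases sq_mod8_even h2 with h8 | h8 <;> rcases Int.emod_two_eq z with hz | hz <;>
      [ rcases sq_mod8_even hz with h8z | h8z; have h8z := sq_mod8_odd hz;
        rcases sq_mod8_even hz with h8z | h8z; have h8z := sq_mod8_odd hz ] <;> omega
  have hoz : z % 2 = 1 := by
    rcases Int.emod_two_eq z with h2 | h2; swap; · exact h2
    exfalso
    have h8x := sq_mod8_odd hox
    have h8y := sq_mod8_odd hoy
    rcases sq_mod8_even h2 with h8 | h8 <;> omega
  -- sign fix
  obtain ⟨x, hxo, hxyz, hmod4⟩ :
      ∃ x : ℤ, x % 2 = 1 ∧ x^2 + y^2 + z^2 = u ∧ (1+x+y+z) % 4 = 0 := by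
    by_cases h4 : (1+x₀+y+z) % 4 = 0
    · exact ⟨x₀, hox, hxyz₀, h4⟩
    · refine ⟨-x₀, by omega, by linarith [hxyz₀], by omega⟩
  have d1 : (1+x+y+z) % 4 = 0 := hmod4
  have d2 : (1+x-y-z) % 4 = 0 := by omega
  have d3 : (1-x+y-z) % 4 = 0 := by omega
  have d4 : (1-x-y+z) % 4 = 0 := by omega
  refine ⟨(1+x+y+z)/4, (1+x-y-z)/4, (1-x+y-z)/4, (1-x-y+z)/4, ?_, by omega⟩
  have e1 : 4*((1+x+y+z)/4) = 1+x+y+z := by omega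
  have e2 : 4*((1+x-y-z)/4) = 1+x-y-z := by omega
  have e3 : 4*((1-x+y-z)/4) = 1-x+y-z := by omega
  have e4 : 4*((1-x-y+z)/4) = 1-x-y+z := by omega
  have key : 16*(((1+x+y+z)/4)^2 + ((1+x-y-z)/4)^2 + ((1-x+y-z)/4)^2 + ((1-x-y+z)/4)^2)
      = 16*n := by
    linear_combination ((1+x+y+z)/4*4 + (1+x+y+z))*e1 + ((1+x-y-z)/4*4 + (1+x-y-z))*e2
      + ((1-x+y-z)/4*4 + (1-x+y-z))*e3 + ((1-x-y+z)/4*4 + (1-x-y+z))*e4 + 4*hxyz + 4*hu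
  linarith [key]


lemma one_le_sq {x : ℤ} (h : x ≠ 0) : 1 ≤ x^2 := by
  rcases lt_or_gt_of_ne h with h' | h'
  · nlinarith
  · nlinarith

/-- Rounding: we can shift `t` by a multiple of `m` into `[-m/2, m/2]`. -/
lemma round_lemma (m t : ℤ) (hm : 1 ≤ m) : ∃ x : ℤ, (2*(m*x + t))^2 ≤ m^2 := by
  refine ⟨-((2*t + m) / (2*m)), ?_⟩
  have h2m : 0 < 2*m := by omega
  have hd := Int.mul_ediv_add_emod (2*t + m) (2*m)
  have hr0 : 0 ≤ (2*t + m) % (2*m) := Int.emod_nonneg _ (by omega)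
  have hrlt : (2*t + m) % (2*m) < 2*m := Int.emod_lt_of_pos _ h2m
  set q := (2*t + m) / (2*m) with hq
  set r := (2*t + m) % (2*m) with hr
  have key : 2*(m*(-q) + t) = r - m := by linarith
  rw [key]
  nlinarith [hr0, hrlt]

/-- Existence of a minimal vector for a positive binary form, which is primitive. -/
lemma bin_min (A C D : ℤ)
    (hpos : ∀ y z : ℤ, ¬(y = 0 ∧ z = 0) → 1 ≤ A*y^2 + 2*C*y*z + D*z^2) :
    ∃ μ y0 z0 : ℤ, ¬(y0 = 0 ∧ z0 = 0) ∧ A*y0^2 + 2*C*y0*z0 + D*z0^2 = μ ∧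
      Int.gcd y0 z0 = 1 ∧ ∀ y z : ℤ, ¬(y = 0 ∧ z = 0) → μ ≤ A*y^2 + 2*C*y*z + D*z^2 := by
  classical
  set P : ℕ → Prop := fun t => ∃ y z : ℤ, ¬(y = 0 ∧ z = 0) ∧ A*y^2 + 2*C*y*z + D*z^2 = (t:ℤ)
    with hP
  have hA1 : 1 ≤ A := by have := hpos 1 0 (by simp); linarith [this]
  have hex : ∃ t, P t := by
    refine ⟨A.toNat, 1, 0, by simp, ?_⟩
    rw [Int.toNat_of_nonneg (by omega)]; ring
  obtain ⟨y0, z0, hnz0, hval0⟩ := Nat.find_spec hex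
  set μn := Nat.find hex with hμn
  have hmin : ∀ y z : ℤ, ¬(y = 0 ∧ z = 0) → (μn:ℤ) ≤ A*y^2 + 2*C*y*z + D*z^2 := by
    intro y z hnz
    have h1 : 1 ≤ A*y^2 + 2*C*y*z + D*z^2 := hpos y z hnz
    have hPt : P (A*y^2 + 2*C*y*z + D*z^2).toNat :=
      ⟨y, z, hnz, by rw [Int.toNat_of_nonneg (by omega)]⟩
    have := Nat.find_le (h := hex) hPt
    omega
  -- primitivity
  have hg : Int.gcd y0 z0 = 1 := by
    set g := Int.gcd y0 z0 with hgdef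
    have hgnz : g ≠ 0 := by
      intro h0
      exact hnz0 (Int.gcd_eq_zero_iff.mp h0)
    obtain ⟨y1, hy1⟩ : ((g:ℤ)) ∣ y0 := Int.gcd_dvd_left _ _
    obtain ⟨z1, hz1⟩ : ((g:ℤ)) ∣ z0 := Int.gcd_dvd_right _ _
    have hnz1 : ¬(y1 = 0 ∧ z1 = 0) := by
      rintro ⟨rfl, rfl⟩
      exact hnz0 ⟨by simpa using hy1, by simpa using hz1⟩
    have hval1 : (μn:ℤ) ≤ A*y1^2 + 2*C*y1*z1 + D*z1^2 := hmin y1 z1 hnz1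
    have hfac : (g:ℤ)^2 * (A*y1^2 + 2*C*y1*z1 + D*z1^2) = (μn:ℤ) := by
      rw [← hval0, hy1, hz1]; ring
    have hg1 : (1:ℤ) ≤ (g:ℤ) := by
      have h0 : (0:ℤ) ≤ (g:ℤ) := Int.natCast_nonneg g
      have : (g:ℤ) ≠ 0 := by exact_mod_cast hgnz
      omega
    have hμ1 : (1:ℤ) ≤ (μn:ℤ) := by
      have := hpos y0 z0 hnz0
      omega
    have hstep : (g:ℤ)^2 * (μn:ℤ) ≤ (μn:ℤ) := by
      calc (g:ℤ)^2 * (μn:ℤ) ≤ (g:ℤ)^2 * (A*y1^2 + 2*C*y1*z1 + D*z1^2) :=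
            mul_le_mul_of_nonneg_left hval1 (sq_nonneg _)
        _ = (μn:ℤ) := hfac
    have hgle : (g:ℤ) ≤ 1 := by nlinarith [hstep, hμ1, hg1, sq_nonneg ((g:ℤ)-1)]
    have : (g:ℤ) = 1 := le_antisymm hgle hg1
    exact_mod_cast this
  exact ⟨(μn:ℤ), y0, z0, hnz0, hval0, hg, hmin⟩

/-- A positive definite integral binary quadratic form of determinant 1 is
equivalent to the sum of two squares. -/
lemma bin_iso (A C D : ℤ)
    (hpos : ∀ y z : ℤ, ¬(y = 0 ∧ z = 0) → 1 ≤ A*y^2 + 2*C*y*z + D*z^2)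
    (hdet : A*D - C^2 = 1) :
    ∃ p q r s : ℤ, ∀ y z : ℤ, A*y^2 + 2*C*y*z + D*z^2 = (p*y+q*z)^2 + (r*y+s*z)^2 := by
  obtain ⟨μ, y0, z0, hnz0, hval0, hg, hmin⟩ := bin_min A C D hpos
  have hμ1 : 1 ≤ μ := by rw [← hval0]; exact hpos _ _ hnz0
  -- Bezout
  have hbz : y0 * Int.gcdA y0 z0 + z0 * Int.gcdB y0 z0 = 1 := by
    have := Int.gcd_eq_gcd_ab y0 z0
    rw [hg] at this
    exact_mod_cast this.symm
  set α := Int.gcdA y0 z0 with hα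
  set β := Int.gcdB y0 z0 with hβ
  -- second vector (-β + t*y0, α + t*z0), choose t so that the cross term is small
  set C' := A*y0*(-β) + C*(y0*α + (-β)*z0) + D*z0*α with hC'
  obtain ⟨t, ht⟩ := round_lemma μ C' hμ1
  set w1 := -β + t*y0 with hw1
  set w2 := α + t*z0 with hw2
  have hwnz : ¬(w1 = 0 ∧ w2 = 0) := by
    rintro ⟨h1, h2⟩
    have : y0 * α + z0 * β = 0 := by
      have e1 : β = t*y0 := by omega
      have e2 : α = -(t*z0) := by omega
      rw [e1, e2]; ring
    omega
  set C'' := A*y0*w1 + C*(y0*w2 + w1*z0) + D*z0*w2 with hC''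
  have hC''val : C'' = C' + t*μ := by
    rw [hC'', hC', hw1, hw2, ← hval0]; ring
  have hCsmall : (2*C'')^2 ≤ μ^2 := by
    have : 2*C'' = 2*(μ*t + C') := by rw [hC''val]; ring
    rw [this]; exact ht
  set D'' := A*w1^2 + 2*C*w1*w2 + D*w2^2 with hD''
  have hD''min : μ ≤ D'' := hmin w1 w2 hwnz
  -- determinant of the transformed form
  have hdet2 : μ * D'' - C''^2 = 1 := by
    have hW : y0*w2 - z0*w1 = 1 := by
      rw [hw1, hw2]
      have : y0 * (α + t*z0) - z0 * (-β + t*y0) = y0*α + z0*β := by ring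
      rw [this]; omega
    have expand : μ * D'' - C''^2 = (A*D - C^2) * (y0*w2 - z0*w1)^2 := by
      rw [← hval0, hD'', hC'']; ring
    rw [expand, hW, hdet]; ring
  -- conclude μ = 1, C'' = 0, D'' = 1
  have hμeq : μ = 1 := by
    have hmul : μ*μ ≤ μ*D'' := mul_le_mul_of_nonneg_left hD''min (by linarith)
    have hle : μ ≤ 1 := by nlinarith [hmul, hdet2, hCsmall, hμ1, sq_nonneg (μ-1)]
    omega
  have hC''0 : C'' = 0 := by
    have hsq : C''^2 ≤ 0 := by nlinarith [hCsmall, hμeq]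
    have h0 : C''^2 = 0 := le_antisymm hsq (sq_nonneg _)
    exact pow_eq_zero_iff (by norm_num) |>.mp h0
  have hD''1 : D'' = 1 := by
    rw [hμeq, hC''0] at hdet2
    linear_combination hdet2
  -- the inverse transformation gives the representation
  refine ⟨w2, -w1, -z0, y0, ?_⟩
  intro y z
  have hW : y0*w2 - z0*w1 = 1 := by
    rw [hw1, hw2]
    have : y0 * (α + t*z0) - z0 * (-β + t*y0) = y0*α + z0*β := by ring
    rw [this]; omega
  -- B(y,z) = B(y0*u + w1*w', z0*u + w2*w') where (u,w') = (w2*y - w1*z, -z0*y + y0*z)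
  have key : ∀ u w : ℤ, A*(y0*u + w1*w)^2 + 2*C*(y0*u + w1*w)*(z0*u + w2*w) + D*(z0*u + w2*w)^2
      = μ*u^2 + 2*C''*u*w + D''*w^2 := by
    intro u w
    rw [← hval0, hC'', hD'']; ring
  have hsub : y0*(w2*y - w1*z) + w1*(-z0*y + y0*z) = y := by
    linear_combination y * hW
  have hsub2 : z0*(w2*y - w1*z) + w2*(-z0*y + y0*z) = z := by
    linear_combination z * hW
  have := key (w2*y - w1*z) (-z0*y + y0*z)
  rw [hsub, hsub2] at this
  rw [this, hμeq, hC''0, hD''1]; ring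

/-- The ternary quadratic form with Gram coefficients `sij`. -/
def F3 (s11 s22 s33 s12 s13 s23 x y z : ℤ) : ℤ :=
  s11*x^2 + s22*y^2 + s33*z^2 + 2*(s12*x*y + s13*x*z + s23*y*z)

/-- The polar (bilinear) form of `F3`. -/
def P3 (s11 s22 s33 s12 s13 s23 a1 a2 a3 b1 b2 b3 : ℤ) : ℤ :=
  s11*a1*b1 + s22*a2*b2 + s33*a3*b3 + s12*(a1*b2+a2*b1) + s13*(a1*b3+a3*b1) + s23*(a2*b3+a3*b2)

lemma complete_basis (v1 v2 v3 : ℤ) (h : Int.gcd ((Int.gcd v1 v2 : ℤ)) v3 = 1) :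
    ∃ u1 u2 u3 t1 t2 t3 : ℤ,
      v1*(u2*t3 - u3*t2) - u1*(v2*t3 - v3*t2) + t1*(v2*u3 - v3*u2) = 1 := by
  by_cases h12 : v1 = 0 ∧ v2 = 0
  · obtain ⟨rfl, rfl⟩ := h12
    have hg0 : Int.gcd (0:ℤ) (0:ℤ) = 0 := by simp
    have hv3 : v3 = 1 ∨ v3 = -1 := by
      rw [hg0] at h
      have hna : v3.natAbs = 1 := by simpa [Int.gcd] using h
      rcases Int.natAbs_eq v3 with he | he <;> omega
    refine ⟨1, 0, 0, 0, v3, 0, ?_⟩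
    rcases hv3 with rfl | rfl <;> norm_num
  · have h12' : Int.gcd v1 v2 ≠ 0 := by
      intro h0; exact h12 (Int.gcd_eq_zero_iff.mp h0)
    set g12 : ℤ := ((Int.gcd v1 v2 : ℤ)) with hg12
    have hg12nz : g12 ≠ 0 := by
      simp only [hg12]
      exact_mod_cast h12'
    have hbz1 : v1 * Int.gcdA v1 v2 + v2 * Int.gcdB v1 v2 = g12 := (Int.gcd_eq_gcd_ab v1 v2).symm
    obtain ⟨p, hp⟩ : g12 ∣ v1 := Int.gcd_dvd_left _ _
    obtain ⟨q, hq⟩ : g12 ∣ v2 := Int.gcd_dvd_right _ _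
    have hbz2 : g12 * Int.gcdA g12 v3 + v3 * Int.gcdB g12 v3 = 1 := by
      have h2 := Int.gcd_eq_gcd_ab g12 v3
      rw [h] at h2
      exact_mod_cast h2.symm
    set α := Int.gcdA v1 v2 with hα
    set β := Int.gcdB v1 v2 with hβ
    set γ := Int.gcdA g12 v3 with hγ
    set δ := Int.gcdB g12 v3 with hδ
    have hpq : p * α + q * β = 1 := by
      have hh : g12 * (p*α + q*β) = g12 * 1 := by
        rw [hp, hq] at hbz1
        linear_combination hbz1
      exact mul_left_cancel₀ hg12nz hh
    refine ⟨-β, α, 0, -δ*p, -δ*q, γ, ?_⟩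
    linear_combination γ*hbz1 + v3*δ*hpq + hbz2

/-- Minimal vector of a positive ternary form; it is primitive. -/
lemma tern_min (s11 s22 s33 s12 s13 s23 : ℤ)
    (hpos : ∀ x y z : ℤ, ¬(x = 0 ∧ y = 0 ∧ z = 0) → 1 ≤ F3 s11 s22 s33 s12 s13 s23 x y z) :
    ∃ m v1 v2 v3 : ℤ, ¬(v1 = 0 ∧ v2 = 0 ∧ v3 = 0) ∧ F3 s11 s22 s33 s12 s13 s23 v1 v2 v3 = m ∧
      Int.gcd ((Int.gcd v1 v2 : ℤ)) v3 = 1 ∧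
      ∀ x y z : ℤ, ¬(x = 0 ∧ y = 0 ∧ z = 0) → m ≤ F3 s11 s22 s33 s12 s13 s23 x y z := by
  classical
  set Q : ℤ → ℤ → ℤ → ℤ := F3 s11 s22 s33 s12 s13 s23 with hQ
  set P : ℕ → Prop := fun t => ∃ x y z : ℤ, ¬(x = 0 ∧ y = 0 ∧ z = 0) ∧ Q x y z = (t:ℤ) with hP
  have hs11 : 1 ≤ s11 := by
    have := hpos 1 0 0 (by simp)
    simp only [hQ, F3] at this ⊢
    linarith [this]
  have hex : ∃ t, P t := by
    refine ⟨s11.toNat, 1, 0, 0, by simp, ?_⟩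
    simp only [hQ, F3]
    rw [Int.toNat_of_nonneg (by omega)]; ring
  obtain ⟨v1, v2, v3, hnz0, hval0⟩ := Nat.find_spec hex
  set mn := Nat.find hex with hmn
  have hmin : ∀ x y z : ℤ, ¬(x = 0 ∧ y = 0 ∧ z = 0) → (mn:ℤ) ≤ Q x y z := by
    intro x y z hnz
    have h1 : 1 ≤ Q x y z := hpos x y z hnz
    have hPt : P (Q x y z).toNat := ⟨x, y, z, hnz, by rw [Int.toNat_of_nonneg (by omega)]⟩
    have := Nat.find_le (h := hex) hPt
    omega
  have hm1 : (1:ℤ) ≤ (mn:ℤ) := by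
    have := hpos v1 v2 v3 hnz0
    omega
  -- primitivity
  have hg : Int.gcd ((Int.gcd v1 v2 : ℤ)) v3 = 1 := by
    set g := Int.gcd ((Int.gcd v1 v2 : ℤ)) v3 with hgdef
    have hgnz : g ≠ 0 := by
      intro h0
      obtain ⟨h1, h2⟩ := Int.gcd_eq_zero_iff.mp h0
      have h3 : Int.gcd v1 v2 = 0 := by exact_mod_cast h1
      obtain ⟨h4, h5⟩ := Int.gcd_eq_zero_iff.mp h3
      exact hnz0 ⟨h4, h5, h2⟩
    have hd12 : (g:ℤ) ∣ ((Int.gcd v1 v2 : ℤ)) := Int.gcd_dvd_left _ _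
    obtain ⟨w1, hw1⟩ : (g:ℤ) ∣ v1 := hd12.trans (Int.gcd_dvd_left _ _)
    obtain ⟨w2, hw2⟩ : (g:ℤ) ∣ v2 := hd12.trans (Int.gcd_dvd_right _ _)
    obtain ⟨w3, hw3⟩ : (g:ℤ) ∣ v3 := Int.gcd_dvd_right _ _
    have hnz1 : ¬(w1 = 0 ∧ w2 = 0 ∧ w3 = 0) := by
      rintro ⟨rfl, rfl, rfl⟩
      exact hnz0 ⟨by simpa using hw1, by simpa using hw2, by simpa using hw3⟩
    have hval1 : (mn:ℤ) ≤ Q w1 w2 w3 := hmin w1 w2 w3 hnz1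
    have hfac : (g:ℤ)^2 * Q w1 w2 w3 = (mn:ℤ) := by
      rw [← hval0, hw1, hw2, hw3]
      simp only [hQ, F3]; ring
    have hg1 : (1:ℤ) ≤ (g:ℤ) := by
      have h0 : (0:ℤ) ≤ (g:ℤ) := Int.natCast_nonneg g
      have : (g:ℤ) ≠ 0 := by exact_mod_cast hgnz
      omega
    have hstep : (g:ℤ)^2 * (mn:ℤ) ≤ (mn:ℤ) := by
      calc (g:ℤ)^2 * (mn:ℤ) ≤ (g:ℤ)^2 * Q w1 w2 w3 :=
            mul_le_mul_of_nonneg_left hval1 (sq_nonneg _)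
        _ = (mn:ℤ) := hfac
    have hgle : (g:ℤ) ≤ 1 := by nlinarith [hstep, hm1, hg1, sq_nonneg ((g:ℤ)-1)]
    have : (g:ℤ) = 1 := le_antisymm hgle hg1
    exact_mod_cast this
  exact ⟨(mn:ℤ), v1, v2, v3, hnz0, hval0, hg, hmin⟩

/-- Hermite bound for a positive binary form: `3μ² ≤ 4·det` for the minimum `μ`,
together with a minimal vector. -/
lemma bin_bound (A C D dt : ℤ)
    (hpos : ∀ y z : ℤ, ¬(y = 0 ∧ z = 0) → 1 ≤ A*y^2 + 2*C*y*z + D*z^2)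
    (hdet : A*D - C^2 = dt) :
    ∃ μ y0 z0 : ℤ, ¬(y0 = 0 ∧ z0 = 0) ∧ A*y0^2 + 2*C*y0*z0 + D*z0^2 = μ ∧ 1 ≤ μ ∧
      3*μ^2 ≤ 4*dt := by
  obtain ⟨μ, y0, z0, hnz0, hval0, hg, hmin⟩ := bin_min A C D hpos
  have hμ1 : 1 ≤ μ := by rw [← hval0]; exact hpos _ _ hnz0
  have hbz : y0 * Int.gcdA y0 z0 + z0 * Int.gcdB y0 z0 = 1 := by
    have := Int.gcd_eq_gcd_ab y0 z0
    rw [hg] at this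
    exact_mod_cast this.symm
  set α := Int.gcdA y0 z0 with hα
  set β := Int.gcdB y0 z0 with hβ
  set C' := A*y0*(-β) + C*(y0*α + (-β)*z0) + D*z0*α with hC'
  obtain ⟨t, ht⟩ := round_lemma μ C' hμ1
  set w1 := -β + t*y0 with hw1
  set w2 := α + t*z0 with hw2
  have hwnz : ¬(w1 = 0 ∧ w2 = 0) := by
    rintro ⟨h1, h2⟩
    have : y0 * α + z0 * β = 0 := by
      have e1 : β = t*y0 := by omega
      have e2 : α = -(t*z0) := by omega
      rw [e1, e2]; ring
    omega
  set C'' := A*y0*w1 + C*(y0*w2 + w1*z0) + D*z0*w2 with hC''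
  have hC''val : C'' = C' + t*μ := by
    rw [hC'', hC', hw1, hw2, ← hval0]; ring
  have hCsmall : (2*C'')^2 ≤ μ^2 := by
    have : 2*C'' = 2*(μ*t + C') := by rw [hC''val]; ring
    rw [this]; exact ht
  set D'' := A*w1^2 + 2*C*w1*w2 + D*w2^2 with hD''
  have hD''min : μ ≤ D'' := hmin w1 w2 hwnz
  have hdet2 : μ * D'' - C''^2 = dt := by
    have hW : y0*w2 - z0*w1 = 1 := by
      rw [hw1, hw2]
      have : y0 * (α + t*z0) - z0 * (-β + t*y0) = y0*α + z0*β := by ring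
      rw [this]; omega
    have expand : μ * D'' - C''^2 = (A*D - C^2) * (y0*w2 - z0*w1)^2 := by
      rw [← hval0, hD'', hC'']; ring
    rw [expand, hW, hdet]; ring
  have hmul : μ*μ ≤ μ*D'' := mul_le_mul_of_nonneg_left hD''min (by linarith)
  exact ⟨μ, y0, z0, hnz0, hval0, hμ1, by nlinarith [hmul, hdet2, hCsmall]⟩

set_option maxHeartbeats 1000000 in
/-- A positive definite integral ternary quadratic form of determinant 1
represents only sums of three squares. -/
lemma tern_main (s11 s22 s33 s12 s13 s23 : ℤ)
    (hpos : ∀ x y z : ℤ, ¬(x = 0 ∧ y = 0 ∧ z = 0) → 1 ≤ F3 s11 s22 s33 s12 s13 s23 x y z)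
    (hdet : s11*s22*s33 + 2*s12*s13*s23 - s11*s23^2 - s22*s13^2 - s33*s12^2 = 1)
    (X Y Z : ℤ) :
    ∃ x y z : ℤ, x^2 + y^2 + z^2 = F3 s11 s22 s33 s12 s13 s23 X Y Z := by
  obtain ⟨m, v1, v2, v3, hnz, hval, hprim, hmin⟩ := tern_min s11 s22 s33 s12 s13 s23 hpos
  have hm1 : 1 ≤ m := by rw [← hval]; exact hpos _ _ _ hnz
  obtain ⟨u1, u2, u3, t1, t2, t3, hU⟩ := complete_basis v1 v2 v3 hprim
  set t22 := F3 s11 s22 s33 s12 s13 s23 u1 u2 u3 with ht22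
  set t33 := F3 s11 s22 s33 s12 s13 s23 t1 t2 t3 with ht33
  set t12 := P3 s11 s22 s33 s12 s13 s23 v1 v2 v3 u1 u2 u3 with ht12
  set t13 := P3 s11 s22 s33 s12 s13 s23 v1 v2 v3 t1 t2 t3 with ht13
  set t23 := P3 s11 s22 s33 s12 s13 s23 u1 u2 u3 t1 t2 t3 with ht23
  have hsubst : ∀ x y z : ℤ,
      F3 s11 s22 s33 s12 s13 s23 (x*v1+y*u1+z*t1) (x*v2+y*u2+z*t2) (x*v3+y*u3+z*t3)
      = m*x^2 + t22*y^2 + t33*z^2 + 2*(t12*x*y + t13*x*z + t23*y*z) := by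
    intro x y z
    rw [← hval, ht22, ht33, ht12, ht13, ht23]
    simp only [F3, P3]; ring
  have hinj : ∀ x y z : ℤ, ¬(x = 0 ∧ y = 0 ∧ z = 0) →
      ¬(x*v1+y*u1+z*t1 = 0 ∧ x*v2+y*u2+z*t2 = 0 ∧ x*v3+y*u3+z*t3 = 0) := by
    intro x y z hxyz ⟨e1, e2, e3⟩
    refine hxyz ⟨?_, ?_, ?_⟩
    · linear_combination (u2*t3-u3*t2)*e1 + (u3*t1-u1*t3)*e2 + (u1*t2-u2*t1)*e3 - x*hU
    · linear_combination (v3*t2-v2*t3)*e1 + (v1*t3-v3*t1)*e2 + (v2*t1-v1*t2)*e3 - y*hU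
    · linear_combination (v2*u3-v3*u2)*e1 + (v3*u1-v1*u3)*e2 + (v1*u2-v2*u1)*e3 - z*hU
  have hmin' : ∀ x y z : ℤ, ¬(x = 0 ∧ y = 0 ∧ z = 0) →
      m ≤ m*x^2 + t22*y^2 + t33*z^2 + 2*(t12*x*y + t13*x*z + t23*y*z) := by
    intro x y z hxyz
    rw [← hsubst x y z]
    exact hmin _ _ _ (hinj x y z hxyz)
  -- determinant of transformed form
  have tdet : m*t22*t33 + 2*(t12*t13*t23) - m*t23^2 - t22*t13^2 - t33*t12^2 = 1 := by
    have expand : m*t22*t33 + 2*(t12*t13*t23) - m*t23^2 - t22*t13^2 - t33*t12^2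
        = (v1*(u2*t3 - u3*t2) - u1*(v2*t3 - v3*t2) + t1*(v2*u3 - v3*u2))^2
          * (s11*s22*s33 + 2*s12*s13*s23 - s11*s23^2 - s22*s13^2 - s33*s12^2) := by
      rw [← hval, ht22, ht33, ht12, ht13, ht23]
      simp only [F3, P3]; ring
    rw [expand, hU, hdet]; ring
  set A := t22*m - t12^2 with hA
  set C := t23*m - t12*t13 with hC
  set D := t33*m - t13^2 with hD
  have I2 : A*D - C^2 = m := by
    rw [hA, hC, hD]; linear_combination m * tdet
  have I1 : ∀ x y z : ℤ, m*(m*x^2 + t22*y^2 + t33*z^2 + 2*(t12*x*y + t13*x*z + t23*y*z))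
      = (m*x + t12*y + t13*z)^2 + (A*y^2 + 2*C*y*z + D*z^2) := by
    intro x y z
    rw [hA, hC, hD]; ring
  have Bpos : ∀ y z : ℤ, ¬(y = 0 ∧ z = 0) → 3*m^2 ≤ 4*(A*y^2 + 2*C*y*z + D*z^2) := by
    intro y z hyz
    obtain ⟨x, hx⟩ := round_lemma m (t12*y + t13*z) hm1
    have hv := hmin' x y z (by tauto)
    have h2 : m*m ≤ m*(m*x^2 + t22*y^2 + t33*z^2 + 2*(t12*x*y + t13*x*z + t23*y*z)) :=
      mul_le_mul_of_nonneg_left hv (by linarith)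
    have hI := I1 x y z
    nlinarith [hx, hI, h2]
  have Bpos1 : ∀ y z : ℤ, ¬(y = 0 ∧ z = 0) → 1 ≤ A*y^2 + 2*C*y*z + D*z^2 := by
    intro y z hyz
    have h3 := Bpos y z hyz
    have h0 : 0 < A*y^2 + 2*C*y*z + D*z^2 := by nlinarith [hm1]
    linarith [Int.add_one_le_iff.mpr h0]
  obtain ⟨μ, y0, z0, hyz0, hμval, hμ1, hμbound⟩ := bin_bound A C D m Bpos1 I2
  have h3m : 3*m^2 ≤ 4*μ := by
    have := Bpos y0 z0 hyz0
    rw [hμval] at this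
    exact this
  have hmeq : m = 1 := by
    have k1 : (3*m^2)*(3*m^2) ≤ (4*μ)*(4*μ) :=
      mul_le_mul h3m h3m (by positivity) (by linarith)
    have hmle : m ≤ 1 := by nlinarith [k1, hμbound, hm1, hμ1]
    omega
  rw [hmeq] at I1 I2 hsubst
  obtain ⟨p, q, r, s, hpqrs⟩ := bin_iso A C D Bpos1 I2
  -- solve U (x,y,z) = (X,Y,Z)
  set x := X*(u2*t3-u3*t2) + Y*(u3*t1-u1*t3) + Z*(u1*t2-u2*t1) with hx
  set y := X*(v3*t2-v2*t3) + Y*(v1*t3-v3*t1) + Z*(v2*t1-v1*t2) with hy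
  set z := X*(v2*u3-v3*u2) + Y*(v3*u1-v1*u3) + Z*(v1*u2-v2*u1) with hz
  have he1 : x*v1 + y*u1 + z*t1 = X := by rw [hx, hy, hz]; linear_combination X*hU
  have he2 : x*v2 + y*u2 + z*t2 = Y := by rw [hx, hy, hz]; linear_combination Y*hU
  have he3 : x*v3 + y*u3 + z*t3 = Z := by rw [hx, hy, hz]; linear_combination Z*hU
  refine ⟨x + t12*y + t13*z, p*y + q*z, r*y + s*z, ?_⟩
  have hs := hsubst x y z
  rw [he1, he2, he3] at hs
  rw [hs]
  have hI := I1 x y z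
  have hB := hpqrs y z
  linarith [hI, hB, sq_nonneg (x + t12*y + t13*z)]

/-- Dirichlet's criterion: a certificate `(a,b,c,k)` with `Nk - a = 1`, `ac - b² = k`
produces a three-square representation of `N`. -/
lemma rep3_of_cert (N a b c k : ℤ) (hN : 1 ≤ N) (ha : 1 ≤ a) (hk : 1 ≤ k)
    (h1 : N*k - a = 1) (h2 : a*c - b^2 = k) : ∃ x y z : ℤ, x^2+y^2+z^2 = N := by
  have hdet : N*a*c + 2*0*1*b - N*b^2 - a*1^2 - c*0^2 = 1 := by
    linear_combination N*h2 + h1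
  have hpos : ∀ x y z : ℤ, ¬(x = 0 ∧ y = 0 ∧ z = 0) → 1 ≤ F3 N a c 0 1 b x y z := by
    intro x y z hnz
    simp only [F3]
    have E1 : N*(N*x^2 + a*y^2 + c*z^2 + 2*(0*x*y + 1*x*z + b*y*z))
        = (N*x + z)^2 + (N*a*y^2 + (N*c-1)*z^2 + 2*N*b*y*z) := by ring
    have E2 : (N*a)*(N*a*y^2 + (N*c-1)*z^2 + 2*N*b*y*z) = (N*a*y + N*b*z)^2 + N*z^2 := by
      linear_combination (N^2*z^2)*h2 + (N*z^2)*h1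
    have hQpos : 0 < N*x^2 + a*y^2 + c*z^2 + 2*(0*x*y + 1*x*z + b*y*z) := by
      by_cases hz : z = 0
      · by_cases hy : y = 0
        · have hx : x ≠ 0 := by tauto
          have : 1 ≤ x^2 := one_le_sq hx
          subst hz hy
          nlinarith [this, hN]
        · -- B2 = N*a*y^2 ≥ 1 > 0
          have hy1 : 1 ≤ y^2 := one_le_sq hy
          have hB2 : 0 < N*a*y^2 + (N*c-1)*z^2 + 2*N*b*y*z := by
            subst hz
            have hNa : (1:ℤ) ≤ N*a := by nlinarith
            nlinarith [mul_le_mul hNa hy1 (by norm_num) (by linarith : (0:ℤ) ≤ N*a)]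
          nlinarith [E1, hB2, sq_nonneg (N*x + z), hN]
      · have hz1 : 1 ≤ z^2 := one_le_sq hz
        have hB2 : 0 < N*a*y^2 + (N*c-1)*z^2 + 2*N*b*y*z := by
          nlinarith [E2, sq_nonneg (N*a*y + N*b*z), hz1, hN, ha,
            mul_pos (by linarith : (0:ℤ) < N) (by linarith : (0:ℤ) < a),
            mul_le_mul hN hz1 (by norm_num) (by linarith : (0:ℤ) ≤ N)]
        nlinarith [E1, hB2, sq_nonneg (N*x + z), hN]
    linarith [Int.add_one_le_iff.mpr hQpos]
  obtain ⟨x, y, z, hxyz⟩ := tern_main N a c 0 1 b hpos hdet 1 0 0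
  refine ⟨x, y, z, ?_⟩
  rw [hxyz]
  simp only [F3]; ring



lemma rep3_caseA (N p : ℕ) (hN : 1 ≤ N) (hp : p.Prime) (hgt : 4*N < p)
    (hdvd : ((N:ℤ)) ∣ (p:ℤ) + 1) (hsq : IsSquare ((-(N:ℤ)) : ZMod p)) :
    ∃ x y z : ℤ, x^2+y^2+z^2 = (N:ℤ) := by
  haveI : Fact p.Prime := ⟨hp⟩
  obtain ⟨k, hk⟩ := hdvd
  have hk1 : 1 ≤ k := by
    rcases le_or_gt 1 k with h | h
    · exact h
    · exfalso
      have h1 : (N:ℤ)*k ≤ 0 :=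
        mul_nonpos_of_nonneg_of_nonpos (by positivity) (by omega)
      have h2 : (0:ℤ) ≤ (p:ℤ) := Int.natCast_nonneg p
      linarith [hk]
  obtain ⟨t, ht⟩ := hsq
  have hNk : ((N:ℤ) : ZMod p) * ((k : ℤ) : ZMod p) = 1 := by
    calc ((N:ℤ) : ZMod p) * ((k : ℤ) : ZMod p) = (((N:ℤ)*k : ℤ) : ZMod p) := by push_cast; ring
      _ = (((p:ℤ) + 1 : ℤ) : ZMod p) := by rw [← hk]
      _ = 1 := by push_cast; simp [ZMod.natCast_self]
  set b0 : ZMod p := t * ((k:ℤ) : ZMod p) with hb0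
  have hbsq : b0 * b0 = -((k:ℤ) : ZMod p) := by
    rw [hb0]
    have h1 : t * ((k:ℤ) : ZMod p) * (t * ((k:ℤ) : ZMod p))
        = (t*t) * (((k:ℤ) : ZMod p) * ((k:ℤ) : ZMod p)) := by ring
    rw [h1, ← ht]
    calc (-(N:ℤ) : ZMod p) * (((k:ℤ) : ZMod p) * ((k:ℤ) : ZMod p))
        = -((((N:ℤ)) : ZMod p) * ((k:ℤ) : ZMod p)) * ((k:ℤ) : ZMod p) := by push_cast; ring
      _ = -((k:ℤ) : ZMod p) := by rw [hNk]; ring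
  have hdvd2 : (p:ℤ) ∣ ((b0.val : ℤ)^2 + k) := by
    rw [← ZMod.intCast_zmod_eq_zero_iff_dvd]
    push_cast
    have hv : ((b0.val : ℕ) : ZMod p) = b0 := by simp [ZMod.natCast_val, ZMod.cast_id]
    rw [hv, sq, hbsq]
    ring
  obtain ⟨c, hc⟩ := hdvd2
  exact rep3_of_cert (N:ℤ) (p:ℤ) (b0.val : ℤ) c k (by exact_mod_cast hN)
    (by exact_mod_cast hp.one_lt.le) hk1 (by linarith [hk]) (by linarith [hc])

lemma rep3_caseB (N p : ℕ) (hN : 1 ≤ N) (hp : p.Prime) (hgt : 4*N < p)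
    (hdvd : ((N:ℤ)) ∣ 2*(p:ℤ) + 1) (hsq : IsSquare ((-(N:ℤ)) : ZMod p)) :
    ∃ x y z : ℤ, x^2+y^2+z^2 = (N:ℤ) := by
  haveI : Fact p.Prime := ⟨hp⟩
  have hpodd : p % 2 = 1 := Nat.Prime.eq_two_or_odd hp |>.resolve_left (by omega)
  obtain ⟨k, hk⟩ := hdvd
  have hk1 : 1 ≤ k := by
    rcases le_or_gt 1 k with h | h
    · exact h
    · exfalso
      have h1 : (N:ℤ)*k ≤ 0 :=
        mul_nonpos_of_nonneg_of_nonpos (by positivity) (by omega)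
      have h2 : (0:ℤ) ≤ (p:ℤ) := Int.natCast_nonneg p
      linarith [hk]
  obtain ⟨t, ht⟩ := hsq
  have hNk : ((N:ℤ) : ZMod p) * ((k : ℤ) : ZMod p) = 1 := by
    calc ((N:ℤ) : ZMod p) * ((k : ℤ) : ZMod p) = (((N:ℤ)*k : ℤ) : ZMod p) := by push_cast; ring
      _ = ((2*(p:ℤ) + 1 : ℤ) : ZMod p) := by rw [← hk]
      _ = 1 := by push_cast; simp [ZMod.natCast_self]
  set b0 : ZMod p := t * ((k:ℤ) : ZMod p) with hb0
  have hbsq : b0 * b0 = -((k:ℤ) : ZMod p) := by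
    rw [hb0]
    have h1 : t * ((k:ℤ) : ZMod p) * (t * ((k:ℤ) : ZMod p))
        = (t*t) * (((k:ℤ) : ZMod p) * ((k:ℤ) : ZMod p)) := by ring
    rw [h1, ← ht]
    calc (-(N:ℤ) : ZMod p) * (((k:ℤ) : ZMod p) * ((k:ℤ) : ZMod p))
        = -((((N:ℤ)) : ZMod p) * ((k:ℤ) : ZMod p)) * ((k:ℤ) : ZMod p) := by push_cast; ring
      _ = -((k:ℤ) : ZMod p) := by rw [hNk]; ring
  have hdvdp : (p:ℤ) ∣ ((b0.val : ℤ)^2 + k) := by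
    rw [← ZMod.intCast_zmod_eq_zero_iff_dvd]
    push_cast
    have hv : ((b0.val : ℕ) : ZMod p) = b0 := by simp [ZMod.natCast_val, ZMod.cast_id]
    rw [hv, sq, hbsq]
    ring
  -- adjust parity
  set b : ℤ := if ((b0.val : ℤ) + k) % 2 = 0 then (b0.val : ℤ) else (b0.val : ℤ) + p with hb
  have hdvdp' : (p:ℤ) ∣ (b^2 + k) := by
    rw [hb]
    split_ifs with hpar
    · exact hdvdp
    · obtain ⟨c0, hc0⟩ := hdvdp
      exact ⟨c0 + 2*(b0.val : ℤ) + p, by linarith [hc0]⟩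
  have hbpar : (b + k) % 2 = 0 := by
    rw [hb]
    split_ifs with hpar
    · omega
    · omega
  have hdvd2 : (2:ℤ) ∣ (b^2 + k) := by
    have hsq2 := sq_mod2 b
    omega
  have hcop : IsCoprime (2:ℤ) (p:ℤ) := by
    rw [Int.isCoprime_iff_gcd_eq_one]
    have h1 : Nat.Coprime 2 p := (Nat.coprime_primes Nat.prime_two hp).mpr (by omega)
    simpa [Int.gcd, Int.natAbs_natCast] using h1
  obtain ⟨c, hc⟩ := hcop.mul_dvd hdvd2 hdvdp'
  exact rep3_of_cert (N:ℤ) (2*(p:ℤ)) b c k (by exact_mod_cast hN)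
    (by omega)
    hk1 (by linarith [hk]) (by linarith [hc])

lemma exists_prime_mod (M : ℕ) (hM : 0 < M) (r : ℕ) (hco : Nat.Coprime r M) (n : ℕ) :
    ∃ p : ℕ, n < p ∧ p.Prime ∧ (M:ℤ) ∣ (p:ℤ) - (r:ℤ) := by
  haveI : NeZero M := ⟨by omega⟩
  have hunit : IsUnit ((r : ZMod M)) := by
    rw [← ZMod.coe_unitOfCoprime r hco]
    exact Units.isUnit _
  obtain ⟨p, hgt, hp, heq⟩ := Nat.forall_exists_prime_gt_and_eq_mod hunit n
  refine ⟨p, hgt, hp, ?_⟩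
  have hmeq : p ≡ r [MOD M] := (ZMod.natCast_eq_natCast_iff p r M).mp heq
  obtain ⟨c, hc⟩ := (Nat.modEq_iff_dvd (n := M)).mp hmeq
  exact ⟨-c, by linarith⟩

lemma isSquare_negN (p N : ℕ) (hp : p.Prime) (hN : 0 < N) (hlt : N < p)
    (hJ : jacobiSym (-(N:ℤ)) p = 1) : IsSquare ((-(N:ℤ)) : ZMod p) := by
  haveI : Fact p.Prime := ⟨hp⟩
  have hne : ((-(N:ℤ) : ℤ) : ZMod p) ≠ 0 := by
    rw [Ne, ZMod.intCast_zmod_eq_zero_iff_dvd, dvd_neg]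
    intro hdvd
    have h1 : p ∣ N := by exact_mod_cast hdvd
    have := Nat.le_of_dvd hN h1
    omega
  have := (legendreSym.eq_one_iff p hne).mp
    (by rw [jacobiSym.legendreSym.to_jacobiSym]; exact hJ)
  simpa using this

lemma coprime_four_of_odd {r : ℕ} (h : r % 2 = 1) : Nat.Coprime r 4 := by
  have h2 : Nat.Coprime r 2 := by
    rw [Nat.coprime_two_right, Nat.odd_iff]
    exact h
  have : (4:ℕ) = 2^2 := rfl
  rw [this]
  exact h2.pow_right 2

lemma coprime_eight_of_odd {r : ℕ} (h : r % 2 = 1) : Nat.Coprime r 8 := by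
  have h2 : Nat.Coprime r 2 := by
    rw [Nat.coprime_two_right, Nat.odd_iff]
    exact h
  have : (8:ℕ) = 2^3 := rfl
  rw [this]
  exact h2.pow_right 3

/-- coprimality from a linear relation `a*r + 1 = b*N` -/
lemma coprime_of_linear {r N a b : ℕ} (h : a*r + 1 = b*N) : Nat.Coprime r N := by
  have h1 : Nat.gcd r N ∣ r := Nat.gcd_dvd_left _ _
  have h2 : Nat.gcd r N ∣ N := Nat.gcd_dvd_right _ _
  have h3 : Nat.gcd r N ∣ b*N := h2.mul_left b
  have h4 : Nat.gcd r N ∣ a*r := h1.mul_left a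
  have h5 : Nat.gcd r N ∣ b*N - a*r := Nat.dvd_sub h3 h4
  have h6 : b*N - a*r = 1 := by omega
  rw [h6] at h5
  exact Nat.dvd_one.mp h5

lemma jac_eq_of_dvd {a₁ a₂ : ℤ} (b : ℕ) (h : (b:ℤ) ∣ a₂ - a₁) :
    jacobiSym a₁ b = jacobiSym a₂ b := by
  apply jacobiSym.mod_left'
  exact Int.modEq_iff_dvd.mpr h

lemma rep3_odd1 (N : ℕ) (hmod : N % 4 = 1) (hN : 1 ≤ N) :
    ∃ x y z : ℤ, x^2+y^2+z^2 = (N:ℤ) := by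
  set r := 2*N - 1 with hr
  have hrodd : r % 2 = 1 := by omega
  have hco : Nat.Coprime r (4*N) :=
    Nat.Coprime.mul_right (coprime_four_of_odd hrodd)
      (coprime_of_linear (a := 1) (b := 2) (by omega))
  obtain ⟨p, hgt, hp, hdv⟩ := exists_prime_mod (4*N) (by omega) r hco (4*N)
  obtain ⟨j, hj⟩ := hdv
  have hj' : (p:ℤ) - (r:ℤ) = 4*((N:ℤ)*j) := by push_cast at hj ⊢; linarith
  obtain ⟨l, hl⟩ : ∃ l : ℤ, (p:ℤ) - (r:ℤ) = 4*l := ⟨(N:ℤ)*j, hj'⟩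
  have hp4 : p % 4 = 1 := by omega
  have hpodd : Odd p := by rw [Nat.odd_iff]; omega
  have hNodd : Odd N := by rw [Nat.odd_iff]; omega
  have hrz : (r:ℤ) = 2*(N:ℤ) - 1 := by omega
  have hdvdN : (N:ℤ) ∣ (p:ℤ) + 1 := ⟨4*j + 2, by linear_combination hj' + hrz⟩
  have hJ : jacobiSym (-(N:ℤ)) p = 1 := by
    have hsplit : (-(N:ℤ)) = (-1) * (N:ℤ) := by ring
    rw [hsplit, jacobiSym.mul_left]
    have h1 : jacobiSym (-1) p = 1 := by
      rw [jacobiSym.at_neg_one hpodd]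
      exact ZMod.χ₄_nat_one_mod_four hp4
    have h2 : jacobiSym ((N:ℤ)) p = 1 := by
      rw [jacobiSym.quadratic_reciprocity_one_mod_four' hNodd hp4]
      rw [jac_eq_of_dvd N (show (N:ℤ) ∣ (-1) - (p:ℤ) from by
        rw [show (-1:ℤ) - (p:ℤ) = -((p:ℤ)+1) by ring]; exact dvd_neg.mpr hdvdN)]
      rw [jacobiSym.at_neg_one hNodd]
      exact ZMod.χ₄_nat_one_mod_four hmod
    rw [h1, h2]; norm_num
  exact rep3_caseA N p hN hp hgt hdvdN (isSquare_negN p N hp (by omega) (by omega) hJ)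

lemma rep3_odd3 (N : ℕ) (hmod : N % 8 = 3) :
    ∃ x y z : ℤ, x^2+y^2+z^2 = (N:ℤ) := by
  have hN : 1 ≤ N := by omega
  set r := (N - 1)/2 with hr
  have hr2 : 2*r + 1 = N := by omega
  have hrodd : r % 2 = 1 := by omega
  have hco : Nat.Coprime r (4*N) :=
    Nat.Coprime.mul_right (coprime_four_of_odd hrodd)
      (coprime_of_linear (a := 2) (b := 1) (by omega))
  obtain ⟨p, hgt, hp, hdv⟩ := exists_prime_mod (4*N) (by omega) r hco (4*N)
  obtain ⟨j, hj⟩ := hdv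
  have hj' : (p:ℤ) - (r:ℤ) = 4*((N:ℤ)*j) := by push_cast at hj ⊢; linarith
  obtain ⟨l, hl⟩ : ∃ l : ℤ, (p:ℤ) - (r:ℤ) = 4*l := ⟨(N:ℤ)*j, hj'⟩
  have hp4 : p % 4 = 1 := by omega
  have hpodd : Odd p := by rw [Nat.odd_iff]; omega
  have hNodd : Odd N := by rw [Nat.odd_iff]; omega
  have hrz : 2*(r:ℤ) + 1 = (N:ℤ) := by omega
  have hdvdN : (N:ℤ) ∣ 2*(p:ℤ) + 1 := ⟨8*j + 1, by linear_combination 2*hj' + hrz⟩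
  have hdvdpr : (N:ℤ) ∣ (r:ℤ) - (p:ℤ) := ⟨-(4*j), by linear_combination -hj'⟩
  have hJ : jacobiSym (-(N:ℤ)) p = 1 := by
    have hsplit : (-(N:ℤ)) = (-1) * (N:ℤ) := by ring
    rw [hsplit, jacobiSym.mul_left]
    have h1 : jacobiSym (-1) p = 1 := by
      rw [jacobiSym.at_neg_one hpodd]
      exact ZMod.χ₄_nat_one_mod_four hp4
    -- J(r | N) = 1 from 2r ≡ -1 mod N
    have hrN : jacobiSym ((r:ℤ)) N = 1 := by
      have hprod : jacobiSym 2 N * jacobiSym ((r:ℤ)) N = jacobiSym (2*(r:ℤ)) N :=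
        (jacobiSym.mul_left 2 (r:ℤ) N).symm
      have h2r : jacobiSym (2*(r:ℤ)) N = jacobiSym (-1) N := by
        rw [jac_eq_of_dvd N (show (N:ℤ) ∣ (-1) - 2*(r:ℤ) from ⟨-1, by linear_combination -hrz⟩)]
      have hval2 : jacobiSym 2 N = ZMod.χ₈ N := jacobiSym.at_two hNodd
      have hχ8 : (ZMod.χ₈ N : ℤ) = -1 := by
        rw [ZMod.χ₈_nat_eq_if_mod_eight]
        rw [if_neg (by omega), if_neg (by omega)]
      have hval1 : jacobiSym (-1) N = -1 := by
        rw [jacobiSym.at_neg_one hNodd]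
        exact ZMod.χ₄_nat_three_mod_four (by omega)
      rw [h2r, hval2, hχ8, hval1] at hprod
      linarith
    have h2 : jacobiSym ((N:ℤ)) p = 1 := by
      rw [jacobiSym.quadratic_reciprocity_one_mod_four' hNodd hp4]
      rw [jac_eq_of_dvd N (show (N:ℤ) ∣ (r:ℤ) - (p:ℤ) from hdvdpr)]
      exact hrN
    rw [h1, h2]; norm_num
  exact rep3_caseB N p hN hp hgt hdvdN (isSquare_negN p N hp (by omega) (by omega) hJ)

lemma rep3_even (N : ℕ) (hmod : N % 8 = 2 ∨ N % 8 = 6) :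
    ∃ x y z : ℤ, x^2+y^2+z^2 = (N:ℤ) := by
  have hN : 1 ≤ N := by omega
  set M := N / 2 with hM
  have hNM : N = 2*M := by omega
  have hModd : Odd M := by rw [Nat.odd_iff]; omega
  -- residue: 2M-1 (class 2) or 4M-1 (class 6)
  set r := if N % 8 = 2 then 2*M - 1 else 4*M - 1 with hr
  have hrodd : r % 2 = 1 := by rw [hr]; split_ifs <;> omega
  have hcoM : Nat.Coprime r M := by
    rw [hr]; split_ifs
    · exact coprime_of_linear (a := 1) (b := 2) (by omega)
    · exact coprime_of_linear (a := 1) (b := 4) (by omega)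
  have hco : Nat.Coprime r (8*M) :=
    Nat.Coprime.mul_right (coprime_eight_of_odd hrodd) hcoM
  obtain ⟨p, hgt, hp, hdv⟩ := exists_prime_mod (8*M) (by omega) r hco (4*N)
  obtain ⟨j, hj⟩ := hdv
  have hj' : (p:ℤ) - (r:ℤ) = 8*((M:ℤ)*j) := by push_cast at hj ⊢; linarith
  obtain ⟨l, hl⟩ : ∃ l : ℤ, (p:ℤ) - (r:ℤ) = 8*l := ⟨(M:ℤ)*j, hj'⟩
  have hpodd : Odd p := by
    rw [Nat.odd_iff]
    rcases hmod with h | h <;> omega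
  have hdvdM : (M:ℤ) ∣ (-1) - (p:ℤ) := by
    have hdvd8 : ((M:ℤ)) ∣ (p:ℤ) - (r:ℤ) := ⟨8*j, by linarith [hj']⟩
    have hdvdr : (M:ℤ) ∣ (r:ℤ) + 1 := by
      rcases eq_or_ne (N % 8) 2 with h | h
      · have hrz : (r:ℤ) = 2*(M:ℤ) - 1 := by rw [hr]; simp [h]; omega
        exact ⟨2, by linarith [hrz]⟩
      · have h6 : N % 8 = 6 := by omega
        have hrz : (r:ℤ) = 4*(M:ℤ) - 1 := by rw [hr]; simp [h]; omega
        exact ⟨4, by linarith [hrz]⟩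
    have : (M:ℤ) ∣ ((p:ℤ) - (r:ℤ)) + ((r:ℤ) + 1) := hdvd8.add hdvdr
    have h2 : ((p:ℤ) - (r:ℤ)) + ((r:ℤ) + 1) = (p:ℤ) + 1 := by ring
    rw [h2] at this
    rw [show (-1:ℤ) - (p:ℤ) = -((p:ℤ)+1) by ring]
    exact dvd_neg.mpr this
  have hdvdN : (N:ℤ) ∣ (p:ℤ) + 1 := by
    -- p+1 is even (p odd) and divisible by M, M odd
    obtain ⟨c, hc⟩ : (M:ℤ) ∣ (p:ℤ) + 1 := by
      have h' : (M:ℤ) ∣ -((-1) - (p:ℤ)) := dvd_neg.mpr hdvdM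
      rw [show -((-1:ℤ) - (p:ℤ)) = (p:ℤ)+1 by ring] at h'
      exact h'
    have hc2 : c % 2 = 0 := by
      have hp2 : (p:ℤ) % 2 = 1 := by omega
      have hM2 : (M:ℤ) % 2 = 1 := by omega
      -- p+1 even = M*c, M odd ⇒ c even
      rcases Int.emod_two_eq c with h | h
      · exact h
      · exfalso
        have : ((M:ℤ)*c) % 2 = 1 := by
          obtain ⟨m', hm'⟩ : ∃ m', (M:ℤ) = 2*m'+1 := ⟨(M:ℤ)/2, by omega⟩
          obtain ⟨c', hc'⟩ : ∃ c', c = 2*c'+1 := ⟨c/2, by omega⟩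
          rw [hm', hc']
          have : (2*m'+1) * (2*c'+1) = 2*(2*m'*c'+m'+c') + 1 := by ring
          rw [this]
          omega
        omega
    obtain ⟨c', hc'⟩ : ∃ c', c = 2*c' := ⟨c/2, by omega⟩
    exact ⟨c', by rw [hc, hc']; push_cast [hNM]; ring⟩
  have hJ : jacobiSym (-(N:ℤ)) p = 1 := by
    have hsplit : (-(N:ℤ)) = (-1) * (2 * (M:ℤ)) := by push_cast [hNM]; ring
    rw [hsplit, jacobiSym.mul_left, jacobiSym.mul_left]
    have hJM : jacobiSym ((p:ℤ)) M = jacobiSym (-1) M := by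
      rw [jac_eq_of_dvd M hdvdM]
    rcases eq_or_ne (N % 8) 2 with h | h
    · -- p % 8 = 1, M % 4 = 1
      have hrz : (r:ℤ) = 2*(M:ℤ) - 1 := by rw [hr]; simp [h]; omega
      have hr8 : (r:ℤ) % 8 = 1 := by omega
      have hp8 : p % 8 = 1 := by omega
      have hp4 : p % 4 = 1 := by omega
      have hM4 : M % 4 = 1 := by omega
      have h1 : jacobiSym (-1) p = 1 := by
        rw [jacobiSym.at_neg_one hpodd]
        exact ZMod.χ₄_nat_one_mod_four hp4
      have h2 : jacobiSym 2 p = 1 := by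
        rw [jacobiSym.at_two hpodd, ZMod.χ₈_nat_eq_if_mod_eight]
        rw [if_neg (by omega), if_pos (by omega)]
      have h3 : jacobiSym ((M:ℤ)) p = 1 := by
        rw [jacobiSym.quadratic_reciprocity_one_mod_four' hModd hp4, hJM,
          jacobiSym.at_neg_one hModd]
        exact ZMod.χ₄_nat_one_mod_four hM4
      rw [h1, h2, h3]; norm_num
    · -- N % 8 = 6: p % 8 = 3, M % 4 = 3
      have h6 : N % 8 = 6 := by omega
      have hrz : (r:ℤ) = 4*(M:ℤ) - 1 := by rw [hr]; simp [h]; omega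
      have hr8 : (r:ℤ) % 8 = 3 := by omega
      have hp8 : p % 8 = 3 := by omega
      have hp4 : p % 4 = 3 := by omega
      have hM4 : M % 4 = 3 := by omega
      have h1 : jacobiSym (-1) p = -1 := by
        rw [jacobiSym.at_neg_one hpodd]
        exact ZMod.χ₄_nat_three_mod_four hp4
      have h2 : jacobiSym 2 p = -1 := by
        rw [jacobiSym.at_two hpodd, ZMod.χ₈_nat_eq_if_mod_eight]
        rw [if_neg (by omega), if_neg (by omega)]
      have h3 : jacobiSym ((M:ℤ)) p = 1 := by
        rw [jacobiSym.quadratic_reciprocity_three_mod_four hM4 hp4, hJM,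
          jacobiSym.at_neg_one hModd, ZMod.χ₄_nat_three_mod_four hM4]
        norm_num
      rw [h1, h2, h3]; norm_num
  exact rep3_caseA N p hN hp (by omega) hdvdN (isSquare_negN p N hp (by omega) (by omega) hJ)

lemma rep3_mod8' (N : ℕ) (h1 : 0 < N)
    (h : N % 8 = 1 ∨ N % 8 = 2 ∨ N % 8 = 3 ∨ N % 8 = 5 ∨ N % 8 = 6) :
    ∃ x y z : ℤ, x^2+y^2+z^2 = (N:ℤ) := by
  rcases h with h | h | h | h | h
  · exact rep3_odd1 N (by omega) h1
  · exact rep3_even N (by omega)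
  · exact rep3_odd3 N h
  · exact rep3_odd1 N (by omega) h1
  · exact rep3_even N (by omega)

/-- The three-square theorem for the residue classes 1,2,3,5,6 mod 8. -/
lemma rep3_mod8 (N : ℕ) (h1 : 0 < N)
    (h : N % 8 = 1 ∨ N % 8 = 2 ∨ N % 8 = 3 ∨ N % 8 = 5 ∨ N % 8 = 6) : Rep3 (N : ℤ) :=
  rep3_mod8' N h1 h

theorem sum_is_cube (n : ℕ) :
    ∃ a b c d : ℤ, a^2 + b^2 + c^2 + d^2 = (n : ℤ) ∧ ∃ m : ℤ, 0 ≤ m ∧ a + b + c + d = m^3 := by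
  induction n using Nat.strong_induction_on with
  | _ n ih =>
  rcases Nat.eq_zero_or_pos n with rfl | hn
  · exact ⟨0, 0, 0, 0, by norm_num, 0, le_refl 0, by norm_num⟩
  by_cases h64 : n % 64 = 0
  · -- n = 64 k, recurse
    obtain ⟨a, b, c, d, hsq, m, hm, hsum⟩ := ih (n / 64) (by omega)
    refine ⟨8*a, 8*b, 8*c, 8*d, ?_, 2*m, by linarith, by linarith [hsum]⟩
    have hnn : 64 * (n / 64) = n := Nat.mul_div_cancel' (Nat.dvd_of_mod_eq_zero h64)
    have hcast : ((n / 64 : ℕ) : ℤ) * 64 = (n : ℤ) := by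
      have : (n / 64) * 64 = n := by omega
      exact_mod_cast this
    nlinarith [hsq, hcast]
  by_cases h2 : n % 2 = 1
  · -- odd case, sum = 1
    have hrep := rep3_mod8 (4*n-1) (by omega) (by omega)
    obtain ⟨a, b, c, d, hsq, hsum⟩ := lemC (n := (n:ℤ)) (u := ((4*n-1 : ℕ) : ℤ))
      (by omega) (by push_cast; omega) hrep
    exact ⟨a, b, c, d, hsq, 1, by norm_num, by omega⟩
  by_cases h4 : n % 4 = 2
  · have hrep := rep3_mod8 n hn (by omega)
    obtain ⟨a, b, c, d, hsq, hsum⟩ := lemA (by omega) hrep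
    exact ⟨a, b, c, d, hsq, 0, le_refl 0, by omega⟩
  by_cases h8 : n % 8 = 4
  · set q := n / 4 with hq
    have hq2 : q % 2 = 1 := by omega
    by_cases hq7 : q % 8 = 7
    · -- n = 4(q-4) + 16
      have hrep := rep3_mod8 (q - 4) (by omega) (by omega)
      obtain ⟨a, b, c, d, hsq, hsum⟩ := lemB hrep
      refine ⟨a, b, c, d, ?_, 2, by norm_num, by omega⟩
      rw [hsq]; push_cast; omega
    · have hrep := rep3_mod8 q (by omega) (by omega)
      have hrep4 : Rep3 ((n : ℤ)) := by
        have := rep3_scale hrep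
        have hc : (4 : ℤ) * (q : ℤ) = (n : ℤ) := by push_cast; omega
        rwa [hc] at this
      obtain ⟨a, b, c, d, hsq, hsum⟩ := lemA (by omega) hrep4
      exact ⟨a, b, c, d, hsq, 0, le_refl 0, by omega⟩
  by_cases h16 : n % 16 = 8
  · have hrep := rep3_mod8 (n/4) (by omega) (by omega)
    have hrep4 : Rep3 ((n : ℤ)) := by
      have := rep3_scale hrep
      have hc : (4 : ℤ) * ((n/4 : ℕ) : ℤ) = (n : ℤ) := by push_cast; omega
      rwa [hc] at this
    obtain ⟨a, b, c, d, hsq, hsum⟩ := lemA (by omega) hrep4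
    exact ⟨a, b, c, d, hsq, 0, le_refl 0, by omega⟩
  · -- n % 16 = 0, n % 64 ≠ 0
    have h16' : n % 16 = 0 := by omega
    set w := n / 16 with hw
    have hw4 : w % 4 ≠ 0 := by omega
    by_cases hw7 : w % 8 = 7
    · -- n = 4*(4*(w-1)) + 16
      have hrep := rep3_mod8 (w-1) (by omega) (by omega)
      have hrep4 : Rep3 ((4*(w-1) : ℕ) : ℤ) := by
        have := rep3_scale hrep
        have hc : (4 : ℤ) * ((w - 1 : ℕ) : ℤ) = ((4*(w-1) : ℕ) : ℤ) := by push_cast; ring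
        rwa [hc] at this
      obtain ⟨a, b, c, d, hsq, hsum⟩ := lemB hrep4
      refine ⟨a, b, c, d, ?_, 2, by norm_num, by omega⟩
      rw [hsq]; push_cast; omega
    · have hrep := rep3_mod8 w (by omega) (by omega)
      have hrep4 : Rep3 ((n : ℤ)) := by
        have h1 := rep3_scale hrep
        have h2 := rep3_scale h1
        have hc : (4 : ℤ) * (4 * (w : ℤ)) = (n : ℤ) := by push_cast; omega
        rwa [hc] at h2
      obtain ⟨a, b, c, d, hsq, hsum⟩ := lemA (by omega) hrep4
      exact ⟨a, b, c, d, hsq, 0, le_refl 0, by omega⟩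
end

section
/- Let n be a nonnegative integer and T an integer with T ≡ n (mod 2). If 4n − T² is a sum of three integer squares, then there exist integers a, b, c, d with a² + b² + c² + d² = n and a + b + c + d = T. -/
lemma four_dvd_of_zmod8 (x : ℤ) (h : (x : ZMod 8) = 0 ∨ (x : ZMod 8) = 4) : (4:ℤ) ∣ x := by
  rcases h with h | h
  · have := (ZMod.intCast_zmod_eq_zero_iff_dvd x 8).1 h
    omega
  · have h4 : ((x - 4 : ℤ) : ZMod 8) = 0 := by push_cast; rw [h]; ring
    have := (ZMod.intCast_zmod_eq_zero_iff_dvd (x - 4) 8).1 h4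
    omega

set_option maxHeartbeats 4000000 in
lemma zmod8_key : ∀ t a b c v : ZMod 8, t^2+a^2+b^2+c^2 = 4*v → 4*(t-v) = 0 →
    (((t+a+b+c = 0 ∨ t+a+b+c = 4) ∧ (t+a-b-c = 0 ∨ t+a-b-c = 4) ∧
      (t-a+b-c = 0 ∨ t-a+b-c = 4) ∧ (t-a-b+c = 0 ∨ t-a-b+c = 4)) ∨
     ((t-a+b+c = 0 ∨ t-a+b+c = 4) ∧ (t-a-b-c = 0 ∨ t-a-b-c = 4) ∧
      (t+a+b-c = 0 ∨ t+a+b-c = 4) ∧ (t+a-b+c = 0 ∨ t+a-b+c = 4))) := by decide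

lemma build (n T A B C : ℤ) (h4 : T^2+A^2+B^2+C^2 = 4*n)
    (d1 : (4:ℤ) ∣ T+A+B+C) (d2 : (4:ℤ) ∣ T+A-B-C)
    (d3 : (4:ℤ) ∣ T-A+B-C) (d4 : (4:ℤ) ∣ T-A-B+C) :
    ∃ a b c d : ℤ, a^2+b^2+c^2+d^2 = n ∧ a+b+c+d = T := by
  obtain ⟨a, ha⟩ := d1
  obtain ⟨b, hb⟩ := d2
  obtain ⟨c, hc⟩ := d3
  obtain ⟨d, hd⟩ := d4
  refine ⟨a, b, c, d, ?_, by linarith⟩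
  have h16 : 16*(a^2+b^2+c^2+d^2) = 16*n := by
    linear_combination (-(T+A+B+C)-4*a)*ha + (-(T+A-B-C)-4*b)*hb + (-(T-A+B-C)-4*c)*hc
      + (-(T-A-B+C)-4*d)*hd + 4*h4
  linarith

theorem converse_direction (n T : ℤ) (hn : 0 ≤ n) (hpar : T ≡ n [ZMOD 2])
    (h : ∃ A B C : ℤ, A^2 + B^2 + C^2 = 4 * n - T^2) :
    ∃ a b c d : ℤ, a^2 + b^2 + c^2 + d^2 = n ∧ a + b + c + d = T := by
  obtain ⟨A, B, C, hABC⟩ := h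
  have h4 : T^2 + A^2 + B^2 + C^2 = 4*n := by linarith
  have hd2 : (2:ℤ) ∣ n - T := hpar.dvd
  have hz : ((T:ZMod 8))^2 + (A:ZMod 8)^2 + (B:ZMod 8)^2 + (C:ZMod 8)^2 = 4*(n:ZMod 8) := by
    have := congrArg (fun x : ℤ => (x : ZMod 8)) h4
    push_cast at this
    linear_combination this
  have hz2 : 4*((T:ZMod 8) - (n:ZMod 8)) = 0 := by
    have h8 : (8:ℤ) ∣ 4*(T - n) := by omega
    have := (ZMod.intCast_zmod_eq_zero_iff_dvd (4*(T-n)) 8).2 h8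
    push_cast at this
    linear_combination this
  rcases zmod8_key T A B C n hz hz2 with ⟨e1, e2, e3, e4⟩ | ⟨e1, e2, e3, e4⟩
  · refine build n T A B C h4 (four_dvd_of_zmod8 _ ?_) (four_dvd_of_zmod8 _ ?_)
      (four_dvd_of_zmod8 _ ?_) (four_dvd_of_zmod8 _ ?_) <;> push_cast
    · rcases e1 with h | h
      exacts [Or.inl (by linear_combination h), Or.inr (by linear_combination h)]
    · rcases e2 with h | h
      exacts [Or.inl (by linear_combination h), Or.inr (by linear_combination h)]
    · rcases e3 with h | h
      exacts [Or.inl (by linear_combination h), Or.inr (by linear_combination h)]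
    · rcases e4 with h | h
      exacts [Or.inl (by linear_combination h), Or.inr (by linear_combination h)]
  · refine build n T (-A) B C (by linear_combination h4) (four_dvd_of_zmod8 _ ?_)
      (four_dvd_of_zmod8 _ ?_) (four_dvd_of_zmod8 _ ?_) (four_dvd_of_zmod8 _ ?_) <;> push_cast
    · rcases e1 with h | h
      exacts [Or.inl (by linear_combination h), Or.inr (by linear_combination h)]
    · rcases e2 with h | h
      exacts [Or.inl (by linear_combination h), Or.inr (by linear_combination h)]
    · rcases e3 with h | h
      exacts [Or.inl (by linear_combination h), Or.inr (by linear_combination h)]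
    · rcases e4 with h | h
      exacts [Or.inl (by linear_combination h), Or.inr (by linear_combination h)]
end

section
/- Let n be a nonnegative integer and T an integer with T ≡ n (mod 2). Then T ∈ S(n) if and only if 4n − T² is a sum of three integer squares, where S(n) = {a+b+c+d : a,b,c,d ∈ ℤ, a²+b²+c²+d² = n}. -/
lemma key : ∀ t a b c : ZMod 8, t^2+a^2+b^2+c^2 = 4*t →
    ∃ s1 s2 s3 : Bool,
      (ZMod.castHom (by norm_num : (4:ℕ) ∣ 8) (ZMod 4))
        (t + cond s1 a (-a) + cond s2 b (-b) + cond s3 c (-c)) = 0 ∧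
      (ZMod.castHom (by norm_num : (4:ℕ) ∣ 8) (ZMod 4))
        (t + cond s1 a (-a) - cond s2 b (-b) - cond s3 c (-c)) = 0 ∧
      (ZMod.castHom (by norm_num : (4:ℕ) ∣ 8) (ZMod 4))
        (t - cond s1 a (-a) + cond s2 b (-b) - cond s3 c (-c)) = 0 ∧
      (ZMod.castHom (by norm_num : (4:ℕ) ∣ 8) (ZMod 4))
        (t - cond s1 a (-a) - cond s2 b (-b) + cond s3 c (-c)) = 0 := by decide

theorem main_theorem (n T : ℤ) (hn : 0 ≤ n) (hpar : T ≡ n [ZMOD 2]) :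
    (∃ a b c d : ℤ, a^2 + b^2 + c^2 + d^2 = n ∧ a + b + c + d = T) ↔
      ∃ A B C : ℤ, A^2 + B^2 + C^2 = 4 * n - T^2 := by
  constructor
  · rintro ⟨a, b, c, d, hsq, hsum⟩
    exact ⟨a + b - c - d, a - b + c - d, a - b - c + d, by subst hsum; nlinarith [hsq]⟩
  · rintro ⟨A, B, C, h⟩
    have h8 : (8:ℤ) ∣ (T^2 + A^2 + B^2 + C^2) - 4*T := by
      obtain ⟨k, hk⟩ := hpar.dvd
      exact ⟨k, by linarith⟩
    have hmod : ((T:ZMod 8))^2 + (A:ZMod 8)^2 + (B:ZMod 8)^2 + (C:ZMod 8)^2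
        = 4 * (T:ZMod 8) := by
      have := (ZMod.intCast_eq_intCast_iff' _ _ _).mpr
        (Int.ModEq.symm (Int.modEq_iff_dvd.mpr (by exact_mod_cast h8)))
      push_cast at this
      linear_combination this
    obtain ⟨s1, s2, s3, c1, c2, c3, c4⟩ := key T A B C hmod
    set A' : ℤ := cond s1 A (-A) with hA'
    set B' : ℤ := cond s2 B (-B) with hB'
    set C' : ℤ := cond s3 C (-C) with hC'
    have hA2 : A'^2 = A^2 := by cases s1 <;> simp [hA']
    have hB2 : B'^2 = B^2 := by cases s2 <;> simp [hB']
    have hC2 : C'^2 = C^2 := by cases s3 <;> simp [hC']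
    have e1 : ((A' : ℤ) : ZMod 8) = cond s1 (A:ZMod 8) (-(A:ZMod 8)) := by
      cases s1 <;> simp [hA']
    have e2 : ((B' : ℤ) : ZMod 8) = cond s2 (B:ZMod 8) (-(B:ZMod 8)) := by
      cases s2 <;> simp [hB']
    have e3 : ((C' : ℤ) : ZMod 8) = cond s3 (C:ZMod 8) (-(C:ZMod 8)) := by
      cases s3 <;> simp [hC']
    have div : ∀ x : ℤ, ((x : ZMod 4) = 0) → (4:ℤ) ∣ x := fun x hx =>
      (ZMod.intCast_zmod_eq_zero_iff_dvd x 4).mp hx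
    have cast4 : ∀ x : ℤ, ((x : ZMod 4))
        = (ZMod.castHom (by norm_num : (4:ℕ) ∣ 8) (ZMod 4)) ((x : ZMod 8)) := fun x =>
      (map_intCast _ x).symm
    have d1 : (4:ℤ) ∣ T + A' + B' + C' := by
      apply div; rw [cast4]; push_cast; rw [e1, e2, e3]; exact c1
    have d2 : (4:ℤ) ∣ T + A' - B' - C' := by
      apply div; rw [cast4]; push_cast; rw [e1, e2, e3]; exact c2
    have d3 : (4:ℤ) ∣ T - A' + B' - C' := by
      apply div; rw [cast4]; push_cast; rw [e1, e2, e3]; exact c3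
    have d4 : (4:ℤ) ∣ T - A' - B' + C' := by
      apply div; rw [cast4]; push_cast; rw [e1, e2, e3]; exact c4
    obtain ⟨a, ha⟩ := d1
    obtain ⟨b, hb⟩ := d2
    obtain ⟨c, hc⟩ := d3
    obtain ⟨d, hd⟩ := d4
    refine ⟨a, b, c, d, ?_, ?_⟩
    · have key2 : 16*(a^2+b^2+c^2+d^2) = 16*n := by
        calc 16*(a^2+b^2+c^2+d^2) = (4*a)^2+(4*b)^2+(4*c)^2+(4*d)^2 := by ring
          _ = (T+A'+B'+C')^2+(T+A'-B'-C')^2+(T-A'+B'-C')^2+(T-A'-B'+C')^2 := by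
              rw [ha, hb, hc, hd]
          _ = 4*(T^2+A'^2+B'^2+C'^2) := by ring
          _ = 4*(T^2+A^2+B^2+C^2) := by rw [hA2, hB2, hC2]
          _ = 16*n := by linarith [h]
      linarith [key2]
    · linarith [ha, hb, hc, hd]
end

section
/- Let n be a positive integer not divisible by 4. Then S(n) = {T ∈ ℤ : T ≡ n (mod 2) and T² ≤ 4n}, where S(n) = {a+b+c+d : a,b,c,d ∈ ℤ, a²+b²+c²+d² = n}. -/
namespace SpectrumAux

/-! ### 2×2 and 3×3 integer matrices and integral quadratic forms -/

structure M2 where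
  (p11 p12 p21 p22 : ℤ)

def M2.det (P : M2) : ℤ := P.p11*P.p22 - P.p12*P.p21
def M2.Uni (P : M2) : Prop := P.det = 1 ∨ P.det = -1
def M2.mul (P Q : M2) : M2 :=
  ⟨P.p11*Q.p11 + P.p12*Q.p21, P.p11*Q.p12 + P.p12*Q.p22,
   P.p21*Q.p11 + P.p22*Q.p21, P.p21*Q.p12 + P.p22*Q.p22⟩
def M2.vx (P : M2) (x y : ℤ) : ℤ := P.p11*x + P.p12*y
def M2.vy (P : M2) (x y : ℤ) : ℤ := P.p21*x + P.p22*y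
def M2.adj (P : M2) : M2 := ⟨P.p22, -P.p12, -P.p21, P.p11⟩

theorem M2.det_mul (P Q : M2) : (P.mul Q).det = P.det * Q.det := by
  simp only [M2.mul, M2.det]; ring

theorem M2.adj_vx (P : M2) (x y : ℤ) :
    P.adj.vx (P.vx x y) (P.vy x y) = P.det * x := by
  simp only [M2.adj, M2.vx, M2.vy, M2.det]; ring

theorem M2.adj_vy (P : M2) (x y : ℤ) :
    P.adj.vy (P.vx x y) (P.vy x y) = P.det * y := by
  simp only [M2.adj, M2.vx, M2.vy, M2.det]; ring

theorem M2.vx_adj (P : M2) (x y : ℤ) :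
    P.vx (P.adj.vx x y) (P.adj.vy x y) = P.det * x := by
  simp only [M2.adj, M2.vx, M2.vy, M2.det]; ring

theorem M2.vy_adj (P : M2) (x y : ℤ) :
    P.vy (P.adj.vx x y) (P.adj.vy x y) = P.det * y := by
  simp only [M2.adj, M2.vx, M2.vy, M2.det]; ring

theorem M2.eq_zero_of_app_eq_zero (P : M2) (hP : P.Uni) {x y : ℤ}
    (h1 : P.vx x y = 0) (h2 : P.vy x y = 0) : x = 0 ∧ y = 0 := by
  have hx := P.adj_vx x y
  have hy := P.adj_vy x y
  rw [h1, h2] at hx hy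
  simp only [M2.vx, M2.vy, mul_zero, add_zero, zero_add] at hx hy
  rcases hP with h | h <;> rw [h] at hx hy <;> constructor <;> omega

structure M3 where
  (p11 p12 p13 p21 p22 p23 p31 p32 p33 : ℤ)

def M3.det (P : M3) : ℤ :=
  P.p11*(P.p22*P.p33 - P.p23*P.p32) - P.p12*(P.p21*P.p33 - P.p23*P.p31)
    + P.p13*(P.p21*P.p32 - P.p22*P.p31)

def M3.Uni (P : M3) : Prop := P.det = 1 ∨ P.det = -1

def M3.mul (P Q : M3) : M3 :=
  ⟨P.p11*Q.p11 + P.p12*Q.p21 + P.p13*Q.p31,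
   P.p11*Q.p12 + P.p12*Q.p22 + P.p13*Q.p32,
   P.p11*Q.p13 + P.p12*Q.p23 + P.p13*Q.p33,
   P.p21*Q.p11 + P.p22*Q.p21 + P.p23*Q.p31,
   P.p21*Q.p12 + P.p22*Q.p22 + P.p23*Q.p32,
   P.p21*Q.p13 + P.p22*Q.p23 + P.p23*Q.p33,
   P.p31*Q.p11 + P.p32*Q.p21 + P.p33*Q.p31,
   P.p31*Q.p12 + P.p32*Q.p22 + P.p33*Q.p32,
   P.p31*Q.p13 + P.p32*Q.p23 + P.p33*Q.p33⟩

def M3.vx (P : M3) (x y z : ℤ) : ℤ := P.p11*x + P.p12*y + P.p13*z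
def M3.vy (P : M3) (x y z : ℤ) : ℤ := P.p21*x + P.p22*y + P.p23*z
def M3.vz (P : M3) (x y z : ℤ) : ℤ := P.p31*x + P.p32*y + P.p33*z

def M3.adj (P : M3) : M3 :=
  ⟨P.p22*P.p33 - P.p23*P.p32, -(P.p12*P.p33 - P.p13*P.p32), P.p12*P.p23 - P.p13*P.p22,
   -(P.p21*P.p33 - P.p23*P.p31), P.p11*P.p33 - P.p13*P.p31, -(P.p11*P.p23 - P.p13*P.p21),
   P.p21*P.p32 - P.p22*P.p31, -(P.p11*P.p32 - P.p12*P.p31), P.p11*P.p22 - P.p12*P.p21⟩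

theorem M3.det_mul (P Q : M3) : (P.mul Q).det = P.det * Q.det := by
  simp only [M3.mul, M3.det]; ring

theorem M3.adj_vx (P : M3) (x y z : ℤ) :
    P.adj.vx (P.vx x y z) (P.vy x y z) (P.vz x y z) = P.det * x := by
  simp only [M3.adj, M3.vx, M3.vy, M3.vz, M3.det]; ring

theorem M3.adj_vy (P : M3) (x y z : ℤ) :
    P.adj.vy (P.vx x y z) (P.vy x y z) (P.vz x y z) = P.det * y := by
  simp only [M3.adj, M3.vx, M3.vy, M3.vz, M3.det]; ring

theorem M3.adj_vz (P : M3) (x y z : ℤ) :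
    P.adj.vz (P.vx x y z) (P.vy x y z) (P.vz x y z) = P.det * z := by
  simp only [M3.adj, M3.vx, M3.vy, M3.vz, M3.det]; ring

theorem M3.vx_adj (P : M3) (x y z : ℤ) :
    P.vx (P.adj.vx x y z) (P.adj.vy x y z) (P.adj.vz x y z) = P.det * x := by
  simp only [M3.adj, M3.vx, M3.vy, M3.vz, M3.det]; ring

theorem M3.vy_adj (P : M3) (x y z : ℤ) :
    P.vy (P.adj.vx x y z) (P.adj.vy x y z) (P.adj.vz x y z) = P.det * y := by
  simp only [M3.adj, M3.vx, M3.vy, M3.vz, M3.det]; ring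

theorem M3.vz_adj (P : M3) (x y z : ℤ) :
    P.vz (P.adj.vx x y z) (P.adj.vy x y z) (P.adj.vz x y z) = P.det * z := by
  simp only [M3.adj, M3.vx, M3.vy, M3.vz, M3.det]; ring

theorem M3.eq_zero_of_app_eq_zero (P : M3) (hP : P.Uni) {x y z : ℤ}
    (h1 : P.vx x y z = 0) (h2 : P.vy x y z = 0) (h3 : P.vz x y z = 0) :
    x = 0 ∧ y = 0 ∧ z = 0 := by
  have hx := P.adj_vx x y z
  have hy := P.adj_vy x y z
  have hz := P.adj_vz x y z
  rw [h1, h2, h3] at hx hy hz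
  simp only [M3.vx, M3.vy, M3.vz, mul_zero, add_zero, zero_add] at hx hy hz
  rcases hP with h | h <;> rw [h] at hx hy hz <;> refine ⟨by omega, by omega, by omega⟩

/-! ### binary forms -/

structure T2 where
  (a b c : ℤ)

def T2.val (B : T2) (x y : ℤ) : ℤ := B.a*x^2 + 2*B.b*x*y + B.c*y^2
def T2.bil (B : T2) (x1 y1 x2 y2 : ℤ) : ℤ := B.a*x1*x2 + B.b*(x1*y2+x2*y1) + B.c*y1*y2
def T2.det (B : T2) : ℤ := B.a*B.c - B.b^2
def T2.tr (B : T2) (P : M2) : T2 :=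
  ⟨B.val P.p11 P.p21, B.bil P.p11 P.p21 P.p12 P.p22, B.val P.p12 P.p22⟩
def T2.Pos (B : T2) : Prop := ∀ x y : ℤ, ¬(x = 0 ∧ y = 0) → 0 < B.val x y

theorem T2.val_tr (B : T2) (P : M2) (x y : ℤ) :
    (B.tr P).val x y = B.val (P.vx x y) (P.vy x y) := by
  simp only [T2.tr, T2.val, T2.bil, M2.vx, M2.vy]; ring

theorem T2.det_tr (B : T2) (P : M2) : (B.tr P).det = B.det * P.det^2 := by
  simp only [T2.tr, T2.det, T2.val, T2.bil, M2.det]; ring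

theorem T2.tr_tr (B : T2) (P Q : M2) : (B.tr P).tr Q = B.tr (P.mul Q) := by
  simp only [T2.tr, T2.val, T2.bil, M2.mul]
  congr 1 <;> ring

theorem T2.val_smul (B : T2) (g x y : ℤ) : B.val (g*x) (g*y) = g^2 * B.val x y := by
  simp only [T2.val]; ring

theorem T2.Pos.tr {B : T2} (hB : B.Pos) {P : M2} (hP : P.Uni) : (B.tr P).Pos := by
  intro x y h
  rw [T2.val_tr]
  apply hB
  rintro ⟨h1, h2⟩
  exact h (P.eq_zero_of_app_eq_zero hP h1 h2)

theorem T2.val_tr_surj (B : T2) (P : M2) (hP : P.Uni) (x y : ℤ) :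
    ∃ x' y', (B.tr P).val x' y' = B.val x y := by
  refine ⟨P.adj.vx x y, P.adj.vy x y, ?_⟩
  rw [T2.val_tr, M2.vx_adj, M2.vy_adj, T2.val_smul]
  rcases hP with h | h <;> rw [h] <;> ring

/-! ### ternary forms -/

structure T3 where
  (a b c d e f : ℤ)

/-- the quadratic form with matrix (a d e; d b f; e f c) -/
def T3.val (A : T3) (x y z : ℤ) : ℤ :=
  A.a*x^2 + A.b*y^2 + A.c*z^2 + 2*A.d*x*y + 2*A.e*x*z + 2*A.f*y*z

def T3.bil (A : T3) (x1 y1 z1 x2 y2 z2 : ℤ) : ℤ :=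
  A.a*x1*x2 + A.b*y1*y2 + A.c*z1*z2 + A.d*(x1*y2+x2*y1) + A.e*(x1*z2+x2*z1) + A.f*(y1*z2+y2*z1)

def T3.det (A : T3) : ℤ := A.a*A.b*A.c + 2*(A.d*A.e*A.f) - A.a*A.f^2 - A.b*A.e^2 - A.c*A.d^2

def T3.tr (A : T3) (P : M3) : T3 :=
  ⟨A.val P.p11 P.p21 P.p31, A.val P.p12 P.p22 P.p32, A.val P.p13 P.p23 P.p33,
   A.bil P.p11 P.p21 P.p31 P.p12 P.p22 P.p32,
   A.bil P.p11 P.p21 P.p31 P.p13 P.p23 P.p33,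
   A.bil P.p12 P.p22 P.p32 P.p13 P.p23 P.p33⟩

def T3.Pos (A : T3) : Prop := ∀ x y z : ℤ, ¬(x = 0 ∧ y = 0 ∧ z = 0) → 0 < A.val x y z

theorem T3.val_tr (A : T3) (P : M3) (x y z : ℤ) :
    (A.tr P).val x y z = A.val (P.vx x y z) (P.vy x y z) (P.vz x y z) := by
  simp only [T3.tr, T3.val, T3.bil, M3.vx, M3.vy, M3.vz]; ring

set_option maxHeartbeats 1000000 in
theorem T3.det_tr (A : T3) (P : M3) : (A.tr P).det = A.det * P.det^2 := by
  simp only [T3.tr, T3.det, T3.val, T3.bil, M3.det]; ring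

set_option maxHeartbeats 1000000 in
theorem T3.tr_tr (A : T3) (P Q : M3) : (A.tr P).tr Q = A.tr (P.mul Q) := by
  simp only [T3.tr, T3.val, T3.bil, M3.mul]
  congr 1 <;> ring

theorem T3.val_smul (A : T3) (g x y z : ℤ) :
    A.val (g*x) (g*y) (g*z) = g^2 * A.val x y z := by
  simp only [T3.val]; ring

theorem T3.Pos.tr {A : T3} (hA : A.Pos) {P : M3} (hP : P.Uni) : (A.tr P).Pos := by
  intro x y z h
  rw [T3.val_tr]
  apply hA
  rintro ⟨h1, h2, h3⟩
  exact h (P.eq_zero_of_app_eq_zero hP h1 h2 h3)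

theorem T3.val_tr_surj (A : T3) (P : M3) (hP : P.Uni) (x y z : ℤ) :
    ∃ x' y' z', (A.tr P).val x' y' z' = A.val x y z := by
  refine ⟨P.adj.vx x y z, P.adj.vy x y z, P.adj.vz x y z, ?_⟩
  rw [T3.val_tr, M3.vx_adj, M3.vy_adj, M3.vz_adj, T3.val_smul]
  rcases hP with h | h <;> rw [h] <;> ring



/-- balanced division -/
theorem bdiv (a b : ℤ) (hb : 0 < b) : ∃ s r : ℤ, a = b*s + r ∧ -b ≤ 2*r ∧ 2*r ≤ b := by
  have h1 : a % b + b * (a / b) = a := Int.emod_add_mul_ediv a b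
  have h2 : 0 ≤ a % b := Int.emod_nonneg a (ne_of_gt hb)
  have h3 : a % b < b := Int.emod_lt_of_pos a hb
  rcases le_or_gt (2*(a % b)) b with h | h
  · exact ⟨a / b, a % b, by linarith, by linarith, h⟩
  · exact ⟨a / b + 1, a % b - b, by ring_nf; linarith, by linarith, by linarith⟩

theorem extend2 (x y : ℤ) (h : Int.gcd x y = 1) :
    ∃ P : M2, P.Uni ∧ P.p11 = x ∧ P.p21 = y := by
  refine ⟨⟨x, -Int.gcdB x y, y, Int.gcdA x y⟩, Or.inl ?_, rfl, rfl⟩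
  have hb := Int.gcd_eq_gcd_ab x y
  rw [h] at hb
  simp only [M2.det]
  push_cast at hb
  linarith [hb]

theorem extend3 (x y z : ℤ) (h : Int.gcd (Int.gcd x y) z = 1) :
    ∃ P : M3, P.Uni ∧ P.p11 = x ∧ P.p21 = y ∧ P.p31 = z := by
  by_cases hg : Int.gcd x y = 0
  · have hx : x = 0 ∧ y = 0 := Int.gcd_eq_zero_iff.mp hg
    rw [hg] at h
    -- Int.gcd ↑0 z = z.natAbs
    have hz : z = 1 ∨ z = -1 := by
      have : z.natAbs = 1 := by simpa [Int.gcd] using h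
      rcases Int.natAbs_eq z with h' | h' <;> omega
    refine ⟨⟨x, 1, 0, y, 0, 1, z, 0, 0⟩, ?_, rfl, rfl, rfl⟩
    have : M3.det ⟨x, 1, 0, y, 0, 1, z, 0, 0⟩ = z := by
      simp only [M3.det]; ring
    rw [M3.Uni, this]
    exact hz
  · set g : ℤ := (Int.gcd x y : ℤ) with hgdef
    have hg0 : g ≠ 0 := by
      simp only [hgdef]
      exact_mod_cast fun hh => hg (by exact_mod_cast hh)
    obtain ⟨x1, hx1⟩ : g ∣ x := Int.gcd_dvd_left x y
    obtain ⟨y1, hy1⟩ : g ∣ y := Int.gcd_dvd_right x y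
    have hbez : g = x * Int.gcdA x y + y * Int.gcdB x y := Int.gcd_eq_gcd_ab x y
    set α := Int.gcdA x y
    set β := Int.gcdB x y
    have hgz : Int.gcd g z = 1 := h
    have hbez2 : (1:ℤ) = g * Int.gcdA g z + z * Int.gcdB g z := by
      have := Int.gcd_eq_gcd_ab g z
      rw [hgz] at this
      exact_mod_cast this
    set γ := Int.gcdA g z
    set δ := Int.gcdB g z
    have hx1' : α * x1 + β * y1 = 1 := by
      have hcanc : g * (α * x1 + β * y1) = g * 1 := by
        rw [mul_one]
        calc g * (α * x1 + β * y1) = x * α + y * β := by rw [hx1, hy1]; ring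
        _ = g := by linarith [hbez]
      exact mul_left_cancel₀ hg0 hcanc
    refine ⟨⟨x, -β, -(δ*x1), y, α, -(δ*y1), z, 0, γ⟩, Or.inl ?_, rfl, rfl, rfl⟩
    simp only [M3.det]
    linear_combination (-γ) * hbez + δ*z*hx1' + (-1) * hbez2



theorem T2.exists_min (B : T2) (hB : B.Pos) :
    ∃ μ : ℤ, (∃ x y, ¬(x = 0 ∧ y = 0) ∧ B.val x y = μ) ∧
      (∀ x y, ¬(x = 0 ∧ y = 0) → μ ≤ B.val x y) := by
  classical
  obtain ⟨lb, hlb, hmin⟩ := Int.exists_least_of_bdd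
    (P := fun μ => ∃ x y, ¬(x = 0 ∧ y = 0) ∧ B.val x y = μ)
    ⟨0, by rintro μ ⟨x, y, hxy, rfl⟩; exact le_of_lt (hB x y hxy)⟩
    ⟨B.val 1 0, 1, 0, by simp, rfl⟩
  exact ⟨lb, hlb, fun x y hxy => hmin _ ⟨x, y, hxy, rfl⟩⟩

theorem T3.exists_min (A : T3) (hA : A.Pos) :
    ∃ μ : ℤ, (∃ x y z, ¬(x = 0 ∧ y = 0 ∧ z = 0) ∧ A.val x y z = μ) ∧
      (∀ x y z, ¬(x = 0 ∧ y = 0 ∧ z = 0) → μ ≤ A.val x y z) := by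
  classical
  obtain ⟨lb, hlb, hmin⟩ := Int.exists_least_of_bdd
    (P := fun μ => ∃ x y z, ¬(x = 0 ∧ y = 0 ∧ z = 0) ∧ A.val x y z = μ)
    ⟨0, by rintro μ ⟨x, y, z, hxy, rfl⟩; exact le_of_lt (hA x y z hxy)⟩
    ⟨A.val 1 0 0, 1, 0, 0, by simp, rfl⟩
  exact ⟨lb, hlb, fun x y z hxy => hmin _ ⟨x, y, z, hxy, rfl⟩⟩

theorem T2.tr_shear_a (B : T2) (s : ℤ) : (B.tr ⟨1, -s, 0, 1⟩).a = B.a := by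
  simp only [T2.tr, T2.val]; ring

theorem T2.tr_shear_b (B : T2) (s : ℤ) : (B.tr ⟨1, -s, 0, 1⟩).b = B.b - B.a * s := by
  simp only [T2.tr, T2.bil]; ring

/-- reduction of a positive binary form -/
theorem T2.exists_reduced (B : T2) (hB : B.Pos) :
    ∃ P : M2, P.Uni ∧ 0 < (B.tr P).a ∧
      -(B.tr P).a ≤ 2*(B.tr P).b ∧ 2*(B.tr P).b ≤ (B.tr P).a ∧
      (B.tr P).a ≤ (B.tr P).c ∧
      (∀ x y, ¬(x = 0 ∧ y = 0) → (B.tr P).a ≤ B.val x y) := by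
  obtain ⟨μ, ⟨x, y, hxy0, hval⟩, hmin⟩ := B.exists_min hB
  have hμpos : 0 < μ := hval ▸ hB x y hxy0
  -- minimal vector is primitive
  have hgcd : Int.gcd x y = 1 := by
    set g := Int.gcd x y with hgdef
    have hgne : (g:ℤ) ≠ 0 := by
      intro hh
      have h0 : Int.gcd x y = 0 := by exact_mod_cast hh
      exact hxy0 ⟨(Int.gcd_eq_zero_iff.mp h0).1, (Int.gcd_eq_zero_iff.mp h0).2⟩
    obtain ⟨x1, hx1⟩ : (g:ℤ) ∣ x := Int.gcd_dvd_left x y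
    obtain ⟨y1, hy1⟩ : (g:ℤ) ∣ y := Int.gcd_dvd_right x y
    have h1 : ¬(x1 = 0 ∧ y1 = 0) := by
      rintro ⟨rfl, rfl⟩
      exact hxy0 ⟨by rw [hx1, mul_zero], by rw [hy1, mul_zero]⟩
    have h2 : μ = (g:ℤ)^2 * B.val x1 y1 := by rw [← hval, hx1, hy1, T2.val_smul]
    have h3 : μ ≤ B.val x1 y1 := hmin _ _ h1
    have h4 : 0 < B.val x1 y1 := hB _ _ h1
    have h5 : 1 ≤ (g:ℤ) := by
      omega
    have h6 : (g:ℤ) = 1 := by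
      by_contra hne
      have hge : 2 ≤ (g:ℤ) := by omega
      have hg2 : (0:ℤ) ≤ ((g:ℤ) - 2) * ((g:ℤ) + 2) :=
        mul_nonneg (by linarith) (by linarith)
      have hg4 : 0 ≤ (g:ℤ)^2 - 4 := by nlinarith
      have hsq : 0 ≤ ((g:ℤ)^2 - 4) * B.val x1 y1 := mul_nonneg hg4 h4.le
      nlinarith
    exact_mod_cast h6
  obtain ⟨P₁, hP₁, h11, h21⟩ := extend2 x y hgcd
  have ha1 : (B.tr P₁).a = μ := by
    show B.val P₁.p11 P₁.p21 = μ
    rw [h11, h21, hval]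
  obtain ⟨s, r, hs, hr1, hr2⟩ := bdiv (B.tr P₁).b μ hμpos
  set P₂ : M2 := ⟨1, -s, 0, 1⟩ with hP₂
  have hP₂uni : P₂.Uni := Or.inl (by norm_num [M2.det, hP₂])
  set P : M2 := P₁.mul P₂ with hPdef
  have hPuni : P.Uni := by
    have := M2.det_mul P₁ P₂
    rcases hP₁ with h | h <;> rcases hP₂uni with h' | h' <;>
      simp only [M2.Uni, hPdef, this, h, h'] <;> norm_num
  have htr : B.tr P = (B.tr P₁).tr P₂ := (T2.tr_tr B P₁ P₂).symm
  have ha : (B.tr P).a = μ := by rw [htr, T2.tr_shear_a, ha1]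
  have hb : (B.tr P).b = r := by
    rw [htr, T2.tr_shear_b, ha1]
    omega
  have hminP : ∀ x' y', ¬(x' = 0 ∧ y' = 0) → (B.tr P).a ≤ B.val x' y' := by
    intro x' y' h'
    rw [ha]; exact hmin x' y' h'
  have hvaltr : ∀ x' y', ¬(x' = 0 ∧ y' = 0) → μ ≤ (B.tr P).val x' y' := by
    intro x' y' h'
    rw [T2.val_tr]
    apply hmin
    rintro ⟨hh1, hh2⟩
    exact h' (P.eq_zero_of_app_eq_zero hPuni hh1 hh2)
  have hc : (B.tr P).a ≤ (B.tr P).c := by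
    have : (B.tr P).c = (B.tr P).val 0 1 := by simp [T2.val]
    rw [ha, this]
    exact hvaltr 0 1 (by simp)
  exact ⟨P, hPuni, by rw [ha]; exact hμpos, by rw [ha, hb]; omega, by rw [ha, hb]; omega, hc, hminP⟩

/-- Hermite-type bound: the minimum μ of a positive binary form satisfies 3μ² ≤ 4·det -/
theorem T2.min_facts (B : T2) (hB : B.Pos) :
    ∃ μ : ℤ, 0 < μ ∧ (∃ x y, ¬(x = 0 ∧ y = 0) ∧ B.val x y = μ) ∧
      (∀ x y, ¬(x = 0 ∧ y = 0) → μ ≤ B.val x y) ∧ 3*μ^2 ≤ 4*B.det := by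
  obtain ⟨P, hP, hpos, hb1, hb2, hc, hmin⟩ := B.exists_reduced hB
  have hdetC : (B.tr P).det = B.det := by
    rw [T2.det_tr]
    rcases hP with h | h <;> rw [h] <;> ring
  have hdet_expand : (B.tr P).a * (B.tr P).c - (B.tr P).b^2 = B.det := hdetC
  refine ⟨(B.tr P).a, hpos, ?_, hmin, by nlinarith⟩
  refine ⟨P.vx 1 0, P.vy 1 0, ?_, ?_⟩
  · intro hh
    have := P.eq_zero_of_app_eq_zero hP hh.1 hh.2
    simp at this
  · have h1 : (B.tr P).val 1 0 = B.val (P.vx 1 0) (P.vy 1 0) := T2.val_tr B P 1 0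
    rw [← h1]
    simp [T2.val]

/-- a positive binary form of determinant 1 represents only sums of two squares -/
theorem T2.sum_sq (B : T2) (hB : B.Pos) (hdet : B.det = 1) (x y : ℤ) :
    ∃ r s : ℤ, r^2 + s^2 = B.val x y := by
  obtain ⟨P, hP, hpos, hb1, hb2, hc, hmin⟩ := B.exists_reduced hB
  have hdetC : (B.tr P).det = 1 := by
    rw [T2.det_tr, hdet]
    rcases hP with h | h <;> rw [h] <;> ring
  have hdet_expand : (B.tr P).a * (B.tr P).c - (B.tr P).b^2 = 1 := hdetC
  have ha : (B.tr P).a = 1 := by nlinarith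
  have hb : (B.tr P).b = 0 := by omega
  have hcc : (B.tr P).c = 1 := by rw [ha, hb] at hdet_expand; omega
  obtain ⟨x', y', hval⟩ := B.val_tr_surj P hP x y
  refine ⟨x', y', ?_⟩
  rw [← hval]
  simp only [T2.val, ha, hb, hcc]
  ring

theorem T3.tr_shear_a (B : T3) (s t : ℤ) :
    (B.tr ⟨1, -s, -t, 0, 1, 0, 0, 0, 1⟩).a = B.a := by
  simp only [T3.tr, T3.val]; ring

theorem T3.tr_shear_d (B : T3) (s t : ℤ) :
    (B.tr ⟨1, -s, -t, 0, 1, 0, 0, 0, 1⟩).d = B.d - B.a * s := by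
  simp only [T3.tr, T3.bil]; ring

theorem T3.tr_shear_e (B : T3) (s t : ℤ) :
    (B.tr ⟨1, -s, -t, 0, 1, 0, 0, 0, 1⟩).e = B.e - B.a * t := by
  simp only [T3.tr, T3.bil]; ring

set_option maxHeartbeats 1000000 in
/-- Main reduction theorem: a positive ternary integral form of determinant 1
represents only sums of three squares. -/
theorem T3.sum_of_squares (A : T3) (hA : A.Pos) (hdet : A.det = 1) (x y z : ℤ) :
    ∃ r s t : ℤ, r^2 + s^2 + t^2 = A.val x y z := by
  obtain ⟨μ, ⟨x0, y0, z0, h0, hval⟩, hmin⟩ := A.exists_min hA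
  have hμ : 0 < μ := hval ▸ hA x0 y0 z0 h0
  -- the minimal vector is primitive
  have hgcd : Int.gcd (Int.gcd x0 y0) z0 = 1 := by
    set g := Int.gcd (Int.gcd x0 y0) z0 with hgdef
    have hgne : (g:ℤ) ≠ 0 := by
      intro hh
      have hh0 : Int.gcd (Int.gcd x0 y0) z0 = 0 := by exact_mod_cast hh
      have h1 := Int.gcd_eq_zero_iff.mp hh0
      have h2 := Int.gcd_eq_zero_iff.mp (by exact_mod_cast h1.1 : Int.gcd x0 y0 = 0)
      exact h0 ⟨h2.1, h2.2, h1.2⟩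
    have hd1 : (g:ℤ) ∣ (Int.gcd x0 y0 : ℤ) := Int.gcd_dvd_left _ _
    obtain ⟨x1, hx1⟩ : (g:ℤ) ∣ x0 := hd1.trans (Int.gcd_dvd_left _ _)
    obtain ⟨y1, hy1⟩ : (g:ℤ) ∣ y0 := hd1.trans (Int.gcd_dvd_right _ _)
    obtain ⟨z1, hz1⟩ : (g:ℤ) ∣ z0 := Int.gcd_dvd_right _ _
    have h1 : ¬(x1 = 0 ∧ y1 = 0 ∧ z1 = 0) := by
      rintro ⟨rfl, rfl, rfl⟩
      exact h0 ⟨by rw [hx1, mul_zero], by rw [hy1, mul_zero], by rw [hz1, mul_zero]⟩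
    have h2 : μ = (g:ℤ)^2 * A.val x1 y1 z1 := by rw [← hval, hx1, hy1, hz1, T3.val_smul]
    have h3 : μ ≤ A.val x1 y1 z1 := hmin _ _ _ h1
    have h4 : 0 < A.val x1 y1 z1 := hA _ _ _ h1
    have h5 : 1 ≤ (g:ℤ) := by omega
    have h6 : (g:ℤ) = 1 := by
      by_contra hne
      have hge : 2 ≤ (g:ℤ) := by omega
      have hg2 : (0:ℤ) ≤ ((g:ℤ) - 2) * ((g:ℤ) + 2) := mul_nonneg (by linarith) (by linarith)
      have hg4 : 0 ≤ (g:ℤ)^2 - 4 := by nlinarith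
      have hsq : 0 ≤ ((g:ℤ)^2 - 4) * A.val x1 y1 z1 := mul_nonneg hg4 h4.le
      nlinarith
    exact_mod_cast h6
  obtain ⟨P₁, hP₁, h11, h21, h31⟩ := extend3 x0 y0 z0 hgcd
  have ha1 : (A.tr P₁).a = μ := by
    show A.val P₁.p11 P₁.p21 P₁.p31 = μ
    rw [h11, h21, h31, hval]
  obtain ⟨s, d2, hs, hd1, hd2⟩ := bdiv (A.tr P₁).d μ hμ
  obtain ⟨t, e2, ht, he1, he2⟩ := bdiv (A.tr P₁).e μ hμ
  set P₂ : M3 := ⟨1, -s, -t, 0, 1, 0, 0, 0, 1⟩ with hP₂def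
  have hP₂uni : P₂.Uni := Or.inl (by norm_num [M3.det, hP₂def])
  set Q : M3 := P₁.mul P₂ with hQdef
  have hQuni : Q.Uni := by
    have hdm := M3.det_mul P₁ P₂
    rcases hP₁ with h | h <;> rcases hP₂uni with h' | h' <;>
      simp only [M3.Uni, hQdef, hdm, h, h'] <;> norm_num
  set A₂ : T3 := A.tr Q with hA₂def
  have hA₂tr : A₂ = (A.tr P₁).tr P₂ := (T3.tr_tr A P₁ P₂).symm
  have ha2 : A₂.a = μ := by rw [hA₂tr, hP₂def, T3.tr_shear_a, ha1]
  have hd0 : A₂.d = d2 := by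
    rw [hA₂tr, hP₂def, T3.tr_shear_d, ha1]; omega
  have he0 : A₂.e = e2 := by
    rw [hA₂tr, hP₂def, T3.tr_shear_e, ha1]; omega
  have hdet₂ : A₂.det = 1 := by
    rw [hA₂def, T3.det_tr, hdet]
    rcases hQuni with h | h <;> rw [h] <;> ring
  have hmin₂ : ∀ u v w : ℤ, ¬(u = 0 ∧ v = 0 ∧ w = 0) → μ ≤ A₂.val u v w := by
    intro u v w h'
    rw [hA₂def, T3.val_tr]
    apply hmin
    rintro ⟨hh1, hh2, hh3⟩
    exact h' (Q.eq_zero_of_app_eq_zero hQuni hh1 hh2 hh3)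
  -- the complementary binary form
  set Q' : T2 := ⟨μ*A₂.b - A₂.d^2, μ*A₂.f - A₂.d*A₂.e, μ*A₂.c - A₂.e^2⟩ with hQ'def
  have hkey : ∀ u v w : ℤ, μ * A₂.val u v w = (μ*u + A₂.d*v + A₂.e*w)^2 + Q'.val v w := by
    intro u v w
    simp only [hQ'def, T3.val, T2.val, ha2]
    ring
  have hdetQ' : Q'.det = μ := by
    have hd := hdet₂
    simp only [T3.det] at hd
    rw [ha2] at hd
    simp only [hQ'def, T2.det]
    linear_combination μ * hd
  have hQbound : ∀ v w : ℤ, ¬(v = 0 ∧ w = 0) → 3*μ^2 ≤ 4 * Q'.val v w := by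
    intro v w h'
    obtain ⟨xq, rq, hxq, hr1, hr2⟩ := bdiv (-(A₂.d*v + A₂.e*w)) μ hμ
    have hsub : μ*xq + A₂.d*v + A₂.e*w = -rq := by linarith
    have hv : μ ≤ A₂.val xq v w := hmin₂ xq v w (by tauto)
    have hk := hkey xq v w
    have hsq : (μ*xq + A₂.d*v + A₂.e*w)^2 = rq^2 := by rw [hsub]; ring
    rw [hsq] at hk
    have hμval : μ*μ ≤ μ*A₂.val xq v w := mul_le_mul_of_nonneg_left hv hμ.le
    have h4rq : 4*rq^2 ≤ μ^2 := by nlinarith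
    linarith
  have hQpos : Q'.Pos := by
    intro v w h'
    have := hQbound v w h'
    nlinarith
  obtain ⟨μ₂, hμ₂pos, ⟨va, wa, hva0, hvaval⟩, hμ₂min, hμ₂bound⟩ := Q'.min_facts hQpos
  rw [hdetQ'] at hμ₂bound
  have hlow : 3*μ^2 ≤ 4*μ₂ := by
    have := hQbound va wa hva0
    omega
  -- conclude μ = 1
  have hμone : μ = 1 := by
    have hsq9 : 9*μ^4 ≤ 16*μ₂^2 := by
      have hmm := mul_self_le_mul_self (by positivity : (0:ℤ) ≤ 3*μ^2) hlow
      nlinarith [hmm]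
    have h27 : 27*μ^4 ≤ 64*μ := by linarith
    have h27' : 27*μ^3 ≤ 64 := by
      by_contra h'
      push_neg at h'
      have := mul_lt_mul_of_pos_left h' hμ
      nlinarith [this]
    have hcube : μ^3 < 8 := by linarith
    have hlt : μ < 2 := by
      by_contra h'
      push_neg at h'
      have hfac : (0:ℤ) ≤ (μ - 2) * (μ^2 + 2*μ + 4) :=
        mul_nonneg (by linarith) (by positivity)
      nlinarith [hfac]
    omega
  -- hence d2 = e2 = 0 and the form splits
  have hd20 : A₂.d = 0 := by omega
  have he20 : A₂.e = 0 := by omega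
  -- the binary block
  set B : T2 := ⟨A₂.b, A₂.f, A₂.c⟩ with hBdef
  have hBdet : B.det = 1 := by
    have hd := hdet₂
    simp only [T3.det] at hd
    rw [ha2, hμone, hd20, he20] at hd
    simp only [hBdef, T2.det]
    linarith
  have hBpos : B.Pos := by
    intro v w h'
    have h2 : A₂.val 0 v w = B.val v w := by
      simp only [T3.val, T2.val, hBdef, hd20, he20]
      ring
    have := hmin₂ 0 v w (by tauto)
    rw [h2] at this
    linarith [hμ, this]
  obtain ⟨x', y', z', hxyz'⟩ := A.val_tr_surj Q hQuni x y z
  have hsplit : A₂.val x' y' z' = x'^2 + B.val y' z' := by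
    simp only [T3.val, T2.val, hBdef]
    rw [ha2, hμone, hd20, he20]
    ring
  obtain ⟨r, s', hrs⟩ := B.sum_sq hBpos hBdet y' z'
  refine ⟨x', r, s', ?_⟩
  rw [← hxyz', hsplit, ← hrs]
  ring

/-! ### Arithmetic part: construction of the form via Dirichlet + quadratic reciprocity -/
open scoped NumberTheorySymbols

open ZMod in
theorem get_prime (M : ℕ) (hM : 0 < M) (r : ℕ) (hr : IsCoprime (r:ℤ) ((4*M : ℕ) : ℤ)) :
    ∃ p : ℕ, p.Prime ∧ 4*M < p ∧ p % (4*M) = r % (4*M) := by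
  haveI : NeZero (4*M) := ⟨by omega⟩
  have hunit : IsUnit ((r : ℕ) : ZMod (4*M)) := by
    rw [ZMod.isUnit_iff_coprime]
    have h1 := Int.isCoprime_iff_gcd_eq_one.mp hr
    rwa [Int.gcd_natCast_natCast] at h1
  obtain ⟨p, hgt, hp, hmod⟩ := Nat.forall_exists_prime_gt_and_eq_mod hunit (4*M)
  exact ⟨p, hp, hgt, (ZMod.natCast_eq_natCast_iff' _ _ _).mp hmod⟩

theorem coprime_four {r : ℤ} (hodd : r % 2 = 1) : IsCoprime r 4 := by
  refine ⟨r, -((r/2)^2 + (r/2)), ?_⟩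
  have h : r = 2*(r/2) + 1 := by omega
  nlinarith [h]

/-- key Jacobi symbol computation: if `D*M ≡ 1 mod p` and `p ≡ 1 mod 4` then
`J(-D|p) = J(M|p)`. -/
theorem jacobi_negD (p : ℕ) [Fact p.Prime] (hp4 : p % 4 = 1) (D M : ℤ)
    (hcop : Int.gcd M p = 1) (hDM : (D * M) % (p:ℤ) = 1 % (p:ℤ)) :
    J(-D | p) = J(M | p) := by
  have hoddp : Odd p := Nat.odd_iff.mpr (by omega)
  have h1 : J(D*M | p) = 1 := by rw [jacobiSym.mod_left' hDM, jacobiSym.one_left]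
  have h2 : J(D | p) * J(M | p) = 1 := by rw [← jacobiSym.mul_left]; exact h1
  have h4 : J(M | p)^2 = 1 := jacobiSym.sq_one hcop
  have h5 : J(-1 | p) = 1 := by
    rw [jacobiSym.at_neg_one hoddp, ZMod.χ₄_nat_one_mod_four hp4]
  calc J(-D | p) = J(-1 * D | p) := by rw [neg_one_mul]
    _ = J(-1 | p) * J(D | p) := jacobiSym.mul_left _ _ _
    _ = J(D | p) := by rw [h5, one_mul]
    _ = J(M | p) := by linear_combination J(M | (p:ℕ)) * h2 - J(D | (p:ℕ)) * h4

theorem sq_prime_dvd (p : ℕ) [Fact p.Prime] {D : ℤ} (h : J(-D | p) = 1) :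
    ∃ u : ℤ, (p:ℤ) ∣ u^2 + D := by
  obtain ⟨w, hw⟩ := ZMod.isSquare_of_jacobiSym_eq_one h
  refine ⟨(w.val : ℤ), ?_⟩
  rw [← ZMod.intCast_zmod_eq_zero_iff_dvd]
  push_cast
  push_cast at hw
  have hc : ((w.val : ℕ) : ZMod p) = w := by rw [ZMod.natCast_val, ZMod.cast_id]
  rw [hc]
  linear_combination -hw

theorem case1 (M : ℕ) (hM4 : M % 4 = 1) :
    ∃ a k u : ℤ, 0 < a ∧ 0 < a*k - u^2 ∧ (M:ℤ)*(a*k - u^2) = a + 1 := by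
  have hM : 0 < M := by omega
  have hcast : ((2*M-1 : ℕ) : ℤ) = 2*(M:ℤ) - 1 := by
    rw [Nat.cast_sub (by omega : 1 ≤ 2*M)]; push_cast; ring
  have hc4 : ((4*M : ℕ) : ℤ) = 4*(M:ℤ) := by push_cast; ring
  have hcop : IsCoprime ((2*M-1 : ℕ) : ℤ) ((4*M : ℕ) : ℤ) := by
    rw [hcast, hc4]
    exact IsCoprime.mul_right (coprime_four (by omega)) ⟨-1, 2, by ring⟩
  obtain ⟨p, hp, hgt, hpm⟩ := get_prime M hM (2*M-1) hcop
  haveI := Fact.mk hp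
  rw [Nat.mod_eq_of_lt (by omega : 2*M-1 < 4*M)] at hpm
  have hpdec : 4*M*(p/(4*M)) + (2*M-1) = p := by
    conv_rhs => rw [← Nat.div_add_mod p (4*M)]
    rw [hpm]
  set j := p/(4*M) with hj
  have hpz : (p:ℤ) + 1 = 4*(M:ℤ)*(j:ℤ) + 2*(M:ℤ) := by
    have hcc := congrArg (Nat.cast : ℕ → ℤ) hpdec
    push_cast [Nat.cast_sub (by omega : 1 ≤ 2*M)] at hcc
    linarith
  obtain ⟨K, hK⟩ : ∃ K : ℤ, (p:ℤ) = 4*K + 2*(M:ℤ) - 1 := ⟨(M:ℤ)*(j:ℤ), by linarith⟩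
  have hp4 : p % 4 = 1 := by omega
  obtain ⟨D, hD⟩ : ∃ D : ℤ, (p:ℤ) + 1 = (M:ℤ) * D := ⟨4*(j:ℤ)+2, by linarith⟩
  have hD0 : 0 < D := by
    by_contra h'
    push_neg at h'
    nlinarith [hD, mul_nonneg (Int.natCast_nonneg M) (neg_nonneg.mpr h'), Int.natCast_nonneg p]
  have hcopMp : Int.gcd (M:ℤ) (p:ℤ) = 1 := by
    have hndvd : ¬ (p ∣ M) := fun hd => absurd (Nat.le_of_dvd hM hd) (by omega)
    have h1 : Nat.Coprime p M := (hp.coprime_iff_not_dvd).mpr hndvd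
    rw [Int.gcd_natCast_natCast]
    exact Nat.coprime_comm.mp h1
  have hDM : (D*(M:ℤ)) % (p:ℤ) = 1 % (p:ℤ) := by
    rw [show D*(M:ℤ) = 1 + (p:ℤ)*1 by linarith]
    exact Int.add_mul_emod_self_left 1 (p:ℤ) 1
  have hJ := jacobi_negD p hp4 D (M:ℤ) hcopMp hDM
  have hModd : Odd M := Nat.odd_iff.mpr (by omega)
  have hoddp : Odd p := Nat.odd_iff.mpr (by omega)
  have hmodM : ((p:ℕ):ℤ) % (M:ℤ) = (-1) % (M:ℤ) := Int.modEq_iff_dvd.mpr ⟨-D, by linarith⟩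
  have hJM : J((M:ℕ) | p) = 1 := by
    calc J((M:ℕ) | p) = J((p:ℕ) | M) := jacobiSym.quadratic_reciprocity_one_mod_four hM4 hoddp
      _ = J(-1 | M) := jacobiSym.mod_left' hmodM
      _ = 1 := by rw [jacobiSym.at_neg_one hModd, ZMod.χ₄_nat_one_mod_four hM4]
  obtain ⟨u, hu⟩ := sq_prime_dvd p (hJ.trans hJM)
  obtain ⟨k, hk⟩ := hu
  refine ⟨(p:ℤ), k, u, by exact_mod_cast hp.pos, ?_, ?_⟩
  · have h8 : (p:ℤ)*k - u^2 = D := by linarith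
    rw [h8]; exact hD0
  · have h8 : (p:ℤ)*k - u^2 = D := by linarith
    rw [h8]; linarith

set_option maxHeartbeats 1000000 in
theorem case2 (M : ℕ) (hM4 : M % 4 = 2) :
    ∃ a k u : ℤ, 0 < a ∧ 0 < a*k - u^2 ∧ (M:ℤ)*(a*k - u^2) = a + 1 := by
  have hM : 0 < M := by omega
  obtain ⟨M', hM'⟩ : ∃ M', M = 2*M' := ⟨M/2, by omega⟩
  have hM'odd : Odd M' := Nat.odd_iff.mpr (by omega)
  have hMz : (M:ℤ) = 2*(M':ℤ) := by omega
  have hcast : ((M-1 : ℕ) : ℤ) = (M:ℤ) - 1 := by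
    rw [Nat.cast_sub (by omega : 1 ≤ M)]; push_cast; ring
  have hc4 : ((4*M : ℕ) : ℤ) = 4*(M:ℤ) := by push_cast; ring
  have hcop : IsCoprime ((M-1 : ℕ) : ℤ) ((4*M : ℕ) : ℤ) := by
    rw [hcast, hc4]
    exact IsCoprime.mul_right (coprime_four (by omega)) ⟨-1, 1, by ring⟩
  obtain ⟨p, hp, hgt, hpm⟩ := get_prime M hM (M-1) hcop
  haveI := Fact.mk hp
  rw [Nat.mod_eq_of_lt (by omega : M-1 < 4*M)] at hpm
  have hpdec : 4*M*(p/(4*M)) + (M-1) = p := by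
    conv_rhs => rw [← Nat.div_add_mod p (4*M)]
    rw [hpm]
  set j := p/(4*M) with hj
  have hpz : (p:ℤ) + 1 = 4*(M:ℤ)*(j:ℤ) + (M:ℤ) := by
    have hcc := congrArg (Nat.cast : ℕ → ℤ) hpdec
    push_cast [Nat.cast_sub (by omega : 1 ≤ M)] at hcc
    linarith
  obtain ⟨K, hK⟩ : ∃ K : ℤ, (p:ℤ) = 4*K + (M:ℤ) - 1 := ⟨(M:ℤ)*(j:ℤ), by linarith⟩
  have hp4 : p % 4 = 1 := by omega
  obtain ⟨K2, hK2⟩ : ∃ K2 : ℤ, (p:ℤ) = 8*K2 + (M:ℤ) - 1 := by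
    refine ⟨(M':ℤ)*(j:ℤ), ?_⟩
    have h9 : (M:ℤ)*(j:ℤ) = 2*((M':ℤ)*(j:ℤ)) := by rw [hMz]; ring
    linarith
  obtain ⟨D, hD⟩ : ∃ D : ℤ, (p:ℤ) + 1 = (M:ℤ) * D := ⟨4*(j:ℤ)+1, by linarith⟩
  have hD0 : 0 < D := by
    by_contra h'
    push_neg at h'
    nlinarith [hD, mul_nonneg (Int.natCast_nonneg M) (neg_nonneg.mpr h'), Int.natCast_nonneg p]
  have hcopMp : Int.gcd (M:ℤ) (p:ℤ) = 1 := by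
    have hndvd : ¬ (p ∣ M) := fun hd => absurd (Nat.le_of_dvd hM hd) (by omega)
    have h1 : Nat.Coprime p M := (hp.coprime_iff_not_dvd).mpr hndvd
    rw [Int.gcd_natCast_natCast]
    exact Nat.coprime_comm.mp h1
  have hDM : (D*(M:ℤ)) % (p:ℤ) = 1 % (p:ℤ) := by
    rw [show D*(M:ℤ) = 1 + (p:ℤ)*1 by linarith]
    exact Int.add_mul_emod_self_left 1 (p:ℤ) 1
  have hJ := jacobi_negD p hp4 D (M:ℤ) hcopMp hDM
  have hoddp : Odd p := Nat.odd_iff.mpr (by omega)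
  have h9 : (M:ℤ)*D = 2*((M':ℤ)*D) := by rw [hMz]; ring
  have hmodM' : ((p:ℕ):ℤ) % (M':ℤ) = (-1) % (M':ℤ) :=
    Int.modEq_iff_dvd.mpr ⟨-(2*D), by linear_combination -hD - h9⟩
  have hrec : J((M':ℕ) | p) = J((p:ℕ) | M') :=
    jacobiSym.quadratic_reciprocity_one_mod_four' hM'odd hp4
  have hJM : J((M:ℕ) | p) = 1 := by
    have hMzz : ((M:ℕ):ℤ) = 2 * ((M':ℕ):ℤ) := by exact_mod_cast hMz
    have hsplit : J((M:ℕ) | p) = J(2 | p) * J((M':ℕ) | p) := by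
      rw [hMzz, jacobiSym.mul_left]
    rw [hsplit, hrec, jacobiSym.at_two hoddp,
      jacobiSym.mod_left' hmodM', jacobiSym.at_neg_one hM'odd]
    have hp2 : p % 2 = 1 := by omega
    rcases (by omega : M % 8 = 2 ∨ M % 8 = 6) with h8 | h8
    · have hp8 : p % 8 = 1 := by omega
      have hM'4 : M' % 4 = 1 := by omega
      simp only [ZMod.χ₈_nat_eq_if_mod_eight, hp8, hp2, ZMod.χ₄_nat_one_mod_four hM'4]
      norm_num
    · have hp8 : p % 8 = 5 := by omega
      have hM'4 : M' % 4 = 3 := by omega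
      simp only [ZMod.χ₈_nat_eq_if_mod_eight, hp8, hp2, ZMod.χ₄_nat_three_mod_four hM'4]
      norm_num
  obtain ⟨u, hu⟩ := sq_prime_dvd p (hJ.trans hJM)
  obtain ⟨k, hk⟩ := hu
  refine ⟨(p:ℤ), k, u, by exact_mod_cast hp.pos, ?_, ?_⟩
  · have h8 : (p:ℤ)*k - u^2 = D := by linarith
    rw [h8]; exact hD0
  · have h8 : (p:ℤ)*k - u^2 = D := by linarith
    rw [h8]; linarith

set_option maxHeartbeats 1000000 in
theorem case3 (M : ℕ) (hM8 : M % 8 = 3) :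
    ∃ a k u : ℤ, 0 < a ∧ 0 < a*k - u^2 ∧ (M:ℤ)*(a*k - u^2) = a + 1 := by
  have hM : 0 < M := by omega
  set r : ℕ := (M-1)/2 with hrdef
  have h2r : 2*r + 1 = M := by omega
  have hrz : 2*(r:ℤ) + 1 = (M:ℤ) := by omega
  have hr4 : r % 4 = 1 := by omega
  have hc4 : ((4*M : ℕ) : ℤ) = 4*(M:ℤ) := by push_cast; ring
  have hcop : IsCoprime ((r : ℕ) : ℤ) ((4*M : ℕ) : ℤ) := by
    rw [hc4]
    exact IsCoprime.mul_right (coprime_four (by omega)) ⟨-2, 1, by linear_combination -hrz⟩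
  obtain ⟨p, hp, hgt, hpm⟩ := get_prime M hM r hcop
  haveI := Fact.mk hp
  rw [Nat.mod_eq_of_lt (by omega : r < 4*M)] at hpm
  have hpdec : 4*M*(p/(4*M)) + r = p := by
    conv_rhs => rw [← Nat.div_add_mod p (4*M)]
    rw [hpm]
  set j := p/(4*M) with hj
  have hpz : (p:ℤ) = 4*(M:ℤ)*(j:ℤ) + (r:ℤ) := by
    have hcc := congrArg (Nat.cast : ℕ → ℤ) hpdec
    push_cast at hcc
    linarith
  obtain ⟨K, hK⟩ : ∃ K : ℤ, (p:ℤ) = 4*K + (r:ℤ) := ⟨(M:ℤ)*(j:ℤ), by linarith⟩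
  have hp4 : p % 4 = 1 := by omega
  obtain ⟨D, hD⟩ : ∃ D : ℤ, 2*(p:ℤ) + 1 = (M:ℤ) * D := ⟨8*(j:ℤ)+1, by linarith⟩
  have hD0 : 0 < D := by
    by_contra h'
    push_neg at h'
    nlinarith [hD, mul_nonneg (Int.natCast_nonneg M) (neg_nonneg.mpr h'), Int.natCast_nonneg p]
  have hDodd : Odd D := by
    have hMD : Odd ((M:ℤ)*D) := ⟨(p:ℤ), by linarith⟩
    rcases Int.even_or_odd D with hE | hO
    · exact absurd hMD (Int.not_odd_iff_even.mpr (hE.mul_left (M:ℤ)))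
    · exact hO
  have hcopMp : Int.gcd (M:ℤ) (p:ℤ) = 1 := by
    have hndvd : ¬ (p ∣ M) := fun hd => absurd (Nat.le_of_dvd hM hd) (by omega)
    have h1 : Nat.Coprime p M := (hp.coprime_iff_not_dvd).mpr hndvd
    rw [Int.gcd_natCast_natCast]
    exact Nat.coprime_comm.mp h1
  have hDM : (D*(M:ℤ)) % (p:ℤ) = 1 % (p:ℤ) := by
    rw [show D*(M:ℤ) = 1 + (p:ℤ)*2 by linarith]
    exact Int.add_mul_emod_self_left 1 (p:ℤ) 2
  have hJ := jacobi_negD p hp4 D (M:ℤ) hcopMp hDM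
  have hModd : Odd M := Nat.odd_iff.mpr (by omega)
  have hoddp : Odd p := Nat.odd_iff.mpr (by omega)
  have hgcd2M : Int.gcd 2 (M:ℤ) = 1 :=
    Int.isCoprime_iff_gcd_eq_one.mp ⟨-(r:ℤ), 1, by linear_combination -hrz⟩
  have h44 : J((4:ℤ) | M) = 1 := by
    rw [show (4:ℤ) = 2^2 by norm_num]
    exact jacobiSym.sq_one' hgcd2M
  have hmod : ((4:ℤ)*(p:ℤ)) % (M:ℤ) = (-2) % (M:ℤ) := by
    exact Int.modEq_iff_dvd.mpr ⟨-(2*D), by linear_combination -2*hD⟩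
  have hJpM : J((p:ℕ) | M) = 1 := by
    calc J((p:ℕ) | M) = J(4 | M) * J((p:ℕ) | M) := by rw [h44, one_mul]
      _ = J(4*(p:ℕ) | M) := (jacobiSym.mul_left _ _ _).symm
      _ = J(-2 | M) := jacobiSym.mod_left' hmod
      _ = 1 := by
          rw [jacobiSym.at_neg_two hModd, ZMod.χ₈'_nat_eq_if_mod_eight, hM8]
          have h2 : M % 2 = 1 := by omega
          rw [h2]
          norm_num
  have hJM : J((M:ℕ) | p) = 1 := by
    rw [jacobiSym.quadratic_reciprocity_one_mod_four' hModd hp4, hJpM]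
  obtain ⟨u0, hu0⟩ := sq_prime_dvd p (hJ.trans hJM)
  -- make u odd
  obtain ⟨u, hOu, hu⟩ : ∃ u : ℤ, Odd u ∧ (p:ℤ) ∣ u^2 + D := by
    rcases Int.even_or_odd u0 with hE | hO
    · refine ⟨u0 + p, hE.add_odd (by exact_mod_cast hoddp), ?_⟩
      obtain ⟨c, hc⟩ := hu0
      exact ⟨c + 2*u0 + p, by linear_combination hc⟩
    · exact ⟨u0, hO, hu0⟩
  obtain ⟨w', hw'⟩ := hu
  have heven : Even (u^2 + D) := (hOu.pow).add_odd hDodd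
  rw [hw'] at heven
  have hwe : Even w' := by
    rcases Int.even_mul.mp heven with hE | hE
    · exact absurd (by exact_mod_cast hoddp : Odd (p:ℤ)) (Int.not_odd_iff_even.mpr hE)
    · exact hE
  obtain ⟨k, hk2⟩ := hwe
  have hk : u^2 + D = 2*(p:ℤ)*k := by rw [hw', hk2]; ring
  refine ⟨2*(p:ℤ), k, u, by have := hp.pos; omega, ?_, ?_⟩
  · have h8 : 2*(p:ℤ)*k - u^2 = D := by linarith
    rw [h8]; exact hD0
  · have h8 : 2*(p:ℤ)*k - u^2 = D := by linarith
    rw [h8]; linarith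

theorem form_represents (m a k u : ℤ) (ha : 0 < a) (hD : 0 < a*k - u^2)
    (hMD : m*(a*k - u^2) = a + 1) : ∃ x y z : ℤ, x^2 + y^2 + z^2 = m := by
  set A : T3 := ⟨a, k, m, u, 0, 1⟩ with hA
  have key : ∀ x y z : ℤ, a*(a*k-u^2)*(A.val x y z)
      = (a*k-u^2)*(a*x+u*y)^2 + ((a*k-u^2)*y + a*z)^2 + a*z^2 := by
    intro x y z
    simp only [hA, T3.val]
    linear_combination (a*z^2) * hMD
  have hpos : A.Pos := by
    intro x y z hxyz
    by_contra hnp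
    push_neg at hnp
    have t1 : 0 ≤ (a*k-u^2)*(a*x+u*y)^2 := mul_nonneg hD.le (sq_nonneg _)
    have t2 : 0 ≤ ((a*k-u^2)*y + a*z)^2 := sq_nonneg _
    have t3 : 0 ≤ a*z^2 := mul_nonneg ha.le (sq_nonneg _)
    have hprod : a*(a*k-u^2)*(A.val x y z) ≤ 0 :=
      mul_nonpos_iff.mpr (Or.inl ⟨(mul_pos ha hD).le, hnp⟩)
    have e1 : (a*k-u^2)*(a*x+u*y)^2 = 0 := by linarith [key x y z]
    have e2 : ((a*k-u^2)*y + a*z)^2 = 0 := by linarith [key x y z]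
    have e3 : a*z^2 = 0 := by linarith [key x y z]
    have hz : z = 0 := by
      have h5 : z^2 = 0 := by
        rcases mul_eq_zero.mp e3 with h | h
        · exact absurd h (ne_of_gt ha)
        · exact h
      exact sq_eq_zero_iff.mp h5
    have hy : y = 0 := by
      have h6 : (a*k-u^2)*y + a*z = 0 := sq_eq_zero_iff.mp e2
      rw [hz, mul_zero, add_zero] at h6
      rcases mul_eq_zero.mp h6 with h | h
      · exact absurd h (ne_of_gt hD)
      · exact h
    have hx : x = 0 := by
      have h6 : (a*x+u*y)^2 = 0 := by
        rcases mul_eq_zero.mp e1 with h | h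
        · exact absurd h (ne_of_gt hD)
        · exact h
      have h7 : a*x + u*y = 0 := sq_eq_zero_iff.mp h6
      rw [hy, mul_zero, add_zero] at h7
      rcases mul_eq_zero.mp h7 with h | h
      · exact absurd h (ne_of_gt ha)
      · exact h
    exact hxyz ⟨hx, hy, hz⟩
  have hdet : A.det = 1 := by
    simp only [hA, T3.det]
    linear_combination hMD
  obtain ⟨r, s, t, hrst⟩ := A.sum_of_squares hpos hdet 0 0 1
  refine ⟨r, s, t, ?_⟩
  rw [hrst]
  simp only [hA, T3.val]
  ring

theorem three_squares (m : ℤ) (hm : 0 < m)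
    (h : m % 4 = 1 ∨ m % 4 = 2 ∨ m % 8 = 3) :
    ∃ x y z : ℤ, x^2 + y^2 + z^2 = m := by
  set M : ℕ := m.toNat with hMdef
  have hMm : (M:ℤ) = m := Int.toNat_of_nonneg hm.le
  have h' : M % 4 = 1 ∨ M % 4 = 2 ∨ M % 8 = 3 := by omega
  have habc : ∃ a k u : ℤ, 0 < a ∧ 0 < a*k - u^2 ∧ (M:ℤ)*(a*k - u^2) = a + 1 := by
    rcases h' with h'' | h'' | h''
    · exact case1 M h''
    · exact case2 M h''
    · exact case3 M h''
  obtain ⟨a, k, u, ha, hD, hMD⟩ := habc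
  rw [hMm] at hMD
  exact form_represents m a k u ha hD hMD

theorem sq_par (x : ℤ) : ∃ e, x^2 = x + 2*e := by
  obtain ⟨e, he⟩ := Int.even_mul_succ_self (x-1)
  exact ⟨e, by linear_combination he⟩

theorem sq_odd_decomp (x : ℤ) (h : x % 2 = 1) : ∃ e, x^2 = 8*e + 1 := by
  obtain ⟨w, hw⟩ : ∃ w, x = 2*w + 1 := ⟨(x-1)/2, by omega⟩
  obtain ⟨e, he⟩ := Int.even_mul_succ_self w
  exact ⟨e, by linear_combination (x + 2*w + 1)*hw + 4*he⟩

theorem sq_decomp (x : ℤ) :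
    ∃ e, (x % 2 = 1 ∧ x^2 = 8*e + 1) ∨ (x % 2 = 0 ∧ (x^2 = 8*e ∨ x^2 = 8*e + 4)) := by
  rcases Int.even_or_odd x with hev | hod
  · have h0 : x % 2 = 0 := Int.even_iff.mp hev
    obtain ⟨j, hj⟩ : ∃ j, x = 2*j := ⟨x/2, by omega⟩
    rcases Int.even_or_odd j with ⟨i, hi⟩ | hodj
    · exact ⟨2*i^2, Or.inr ⟨h0, Or.inl (by linear_combination (x+2*j)*hj + 4*(j+i+i)*hi)⟩⟩
    · obtain ⟨f, hf⟩ := sq_odd_decomp j (Int.odd_iff.mp hodj)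
      exact ⟨4*f, Or.inr ⟨h0, Or.inr (by linear_combination (x+2*j)*hj + 4*hf)⟩⟩
  · have h1 : x % 2 = 1 := Int.odd_iff.mp hod
    obtain ⟨e, he⟩ := sq_odd_decomp x h1
    exact ⟨e, Or.inl ⟨h1, he⟩⟩

theorem assemble (n T u v w : ℤ) (h : u^2 + v^2 + w^2 = 4*n - T^2)
    (hvw : (v + w) % 2 = 0) (huw : (u + w) % 2 = 0)
    (h4 : (T + u + v + w) % 4 = 0) :
    ∃ a b c d : ℤ, a^2 + b^2 + c^2 + d^2 = n ∧ a + b + c + d = T := by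
  obtain ⟨s, hs⟩ : ∃ s, v + w = 2*s := ⟨(v+w)/2, by omega⟩
  obtain ⟨r, hr⟩ : ∃ r, u + w = 2*r := ⟨(u+w)/2, by omega⟩
  obtain ⟨q, hq⟩ : ∃ q, u + v = 2*q := ⟨(u+v)/2, by omega⟩
  obtain ⟨a, ha⟩ : ∃ a, T + u + v + w = 4*a := ⟨(T+u+v+w)/4, by omega⟩
  have hu : u = r + q - s := by omega
  have hv : v = s + q - r := by omega
  have hw : w = s + r - q := by omega
  have hT : T = 4*a - q - r - s := by omega
  refine ⟨a, a - s, a - r, a - q, ?_, by omega⟩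
  rw [hu, hv, hw, hT] at h
  have hG : 4*(a^2 + (a-s)^2 + (a-r)^2 + (a-q)^2) = 4*n := by linear_combination h
  linarith

theorem main_backward (n T : ℤ) (hn : 0 < n) (h4 : ¬ (4 ∣ n))
    (hpar : T % 2 = n % 2) (hineq : T^2 ≤ 4*n) :
    ∃ a b c d : ℤ, a^2 + b^2 + c^2 + d^2 = n ∧ a + b + c + d = T := by
  rcases Int.even_or_odd n with hne | hno
  · -- n ≡ 2 (mod 4)
    have hn2 : n % 2 = 0 := Int.even_iff.mp hne
    have hn4 : n % 4 = 2 := by omega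
    have hT2 : T % 2 = 0 := by omega
    obtain ⟨t, ht⟩ : ∃ t, T = 2*t := ⟨T/2, by omega⟩
    have hT2' : T^2 = 4*t^2 := by rw [ht]; ring
    obtain ⟨e1, he1⟩ := sq_decomp t
    have hkpos : 0 < n - t^2 := by omega
    have hk4 : (n - t^2) % 4 = 1 ∨ (n - t^2) % 4 = 2 := by omega
    obtain ⟨x, y, z, hxyz⟩ := three_squares (n - t^2) hkpos
      (by rcases hk4 with h' | h'; exacts [Or.inl h', Or.inr (Or.inl h')])
    obtain ⟨ex, hex⟩ := sq_par x
    obtain ⟨ey, hey⟩ := sq_par y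
    obtain ⟨ez, hez⟩ := sq_par z
    refine assemble n T (2*x) (2*y) (2*z) ?_ (by omega) (by omega) ?_
    · linear_combination 4*hxyz + hT2'
    · -- (T + 2x+2y+2z) % 4 = 0
      have hx2 : (2*x)^2 = 4*x^2 := by ring
      omega
  · -- n odd
    have hn2 : n % 2 = 1 := Int.odd_iff.mp hno
    have hT1 : T % 2 = 1 := by omega
    obtain ⟨eT, heT⟩ := sq_odd_decomp T hT1
    have hm8 : (4*n - T^2) % 8 = 3 := by omega
    have hmpos : 0 < 4*n - T^2 := by omega
    obtain ⟨u, v, w, huvw⟩ := three_squares (4*n - T^2) hmpos (Or.inr (Or.inr hm8))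
    obtain ⟨eu, heu⟩ := sq_decomp u
    obtain ⟨ev, hev⟩ := sq_decomp v
    obtain ⟨ew, hew⟩ := sq_decomp w
    have hodd : u % 2 = 1 ∧ v % 2 = 1 ∧ w % 2 = 1 := by omega
    rcases (by omega : (T + u + v + w) % 4 = 0 ∨ (T + u + v + w) % 4 = 2) with hσ | hσ
    · exact assemble n T u v w huvw (by omega) (by omega) hσ
    · refine assemble n T (-u) v w (by linear_combination huvw) (by omega) (by omega) (by omega)

end SpectrumAux

theorem spectrum_no4 (n : ℤ) (hn : 0 < n) (h4 : ¬ (4 ∣ n)) :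
    {T : ℤ | ∃ a b c d : ℤ, a^2 + b^2 + c^2 + d^2 = n ∧ a + b + c + d = T}
      = {T : ℤ | T ≡ n [ZMOD 2] ∧ T^2 ≤ 4 * n} := by
  ext T
  simp only [Set.mem_setOf_eq]
  constructor
  · rintro ⟨a, b, c, d, h1, h2⟩
    constructor
    · obtain ⟨ka, hka⟩ := Int.even_mul_succ_self (a-1)
      obtain ⟨kb, hkb⟩ := Int.even_mul_succ_self (b-1)
      obtain ⟨kc, hkc⟩ := Int.even_mul_succ_self (c-1)
      obtain ⟨kd, hkd⟩ := Int.even_mul_succ_self (d-1)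
      show T % 2 = n % 2
      have hTn : n - T = 2*(ka+kb+kc+kd) := by
        linear_combination (-1)*h1 + h2 + hka + hkb + hkc + hkd
      omega
    · have hid : 4*n - T^2 = (a-b)^2 + (a-c)^2 + (a-d)^2 + (b-c)^2 + (b-d)^2 + (c-d)^2 := by
        linear_combination (-4)*h1 + (a+b+c+d+T)*h2
      nlinarith [sq_nonneg (a-b), sq_nonneg (a-c), sq_nonneg (a-d), sq_nonneg (b-c),
        sq_nonneg (b-d), sq_nonneg (c-d)]
  · rintro ⟨hpar, hineq⟩
    exact SpectrumAux.main_backward n T hn h4 hpar hineq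
end

section
/- If 8 divides n, then S(n) = 2·S(n/4), i.e., T ∈ S(n) if and only if T is even and T/2 ∈ S(n/4), where S(m) = {a+b+c+d : a,b,c,d ∈ ℤ, a²+b²+c²+d² = m}. -/
lemma key8 : ∀ x y z w : ZMod 8, x^2 + y^2 + z^2 + w^2 = 0 →
    (ZMod.cast x : ZMod 2) = 0 ∧ (ZMod.cast y : ZMod 2) = 0 ∧
    (ZMod.cast z : ZMod 2) = 0 ∧ (ZMod.cast w : ZMod 2) = 0 := by decide

theorem spectrum_dilation (n : ℤ) (hn : 0 ≤ n) (h8 : (8 : ℤ) ∣ n) (T : ℤ) :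
    (∃ a b c d : ℤ, a^2 + b^2 + c^2 + d^2 = n ∧ a + b + c + d = T) ↔
      (Even T ∧ ∃ a b c d : ℤ, a^2 + b^2 + c^2 + d^2 = n / 4 ∧ a + b + c + d = T / 2) := by
  obtain ⟨k, hk⟩ := h8
  constructor
  · rintro ⟨a, b, c, d, hs, ht⟩
    have h0 : ((a : ZMod 8))^2 + (b : ZMod 8)^2 + (c : ZMod 8)^2 + (d : ZMod 8)^2 = 0 := by
      have : ((a^2 + b^2 + c^2 + d^2 : ℤ) : ZMod 8) = 0 := by
        rw [hs]; exact (ZMod.intCast_zmod_eq_zero_iff_dvd _ 8).mpr ⟨k, by omega⟩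
      push_cast at this; linear_combination this
    obtain ⟨ha, hb, hc, hd⟩ := key8 _ _ _ _ h0
    rw [ZMod.cast_intCast (by norm_num : (2:ℕ) ∣ 8)] at ha hb hc hd
    rw [ZMod.intCast_zmod_eq_zero_iff_dvd] at ha hb hc hd
    obtain ⟨a', rfl⟩ := ha
    obtain ⟨b', rfl⟩ := hb
    obtain ⟨c', rfl⟩ := hc
    obtain ⟨d', rfl⟩ := hd
    have hs' : a'^2 + b'^2 + c'^2 + d'^2 = 2 * k := by push_cast at hs; nlinarith [hs]
    refine ⟨⟨a' + b' + c' + d', by omega⟩, a', b', c', d', by omega, by omega⟩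
  · rintro ⟨hT, a, b, c, d, hs, ht⟩
    have hn4 : n / 4 = 2 * k := by omega
    obtain ⟨t, rfl⟩ := hT
    refine ⟨2*a, 2*b, 2*c, 2*d, ?_, by omega⟩
    have : a^2 + b^2 + c^2 + d^2 = 2 * k := by omega
    nlinarith [this]
end

section
/- Let T be an odd integer and n a positive integer with n ≥ T²/4 and n ≡ T (mod 2) (i.e., n odd). Then there exist integers a, b, c, d with a² + b² + c² + d² = n and a + b + c + d = T. -/
def V3 (a b c d e f x y z : ℤ) : ℤ :=
  a*x^2 + d*y^2 + f*z^2 + 2*(b*x*y) + 2*(c*x*z) + 2*(e*y*z)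
def V2 (A B C y z : ℤ) : ℤ := A*y^2 + 2*(B*y*z) + C*z^2
def det3 (a b c d e f : ℤ) : ℤ := a*(d*f - e^2) - b*(b*f - c*e) + c*(b*e - c*d)
def G3 (a b c d e f : ℤ) : Prop :=
  ∀ x y z : ℤ, ∃ r s t : ℤ, V3 a b c d e f x y z = r^2 + s^2 + t^2
def G2 (A B C : ℤ) : Prop := ∀ y z : ℤ, ∃ r s : ℤ, V2 A B C y z = r^2 + s^2
def Pos2 (A B C : ℤ) : Prop := ∀ y z : ℤ, ¬(y = 0 ∧ z = 0) → 0 < V2 A B C y z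
def Low3 (μ a b c d e f : ℤ) : Prop :=
  ∀ x y z : ℤ, ¬(x = 0 ∧ y = 0 ∧ z = 0) → μ ≤ V3 a b c d e f x y z

section pullback
variable (a b c d e f A B C α β γ δ : ℤ)

lemma pull12 (x y z : ℤ) :
    V3 (a*α^2 + 2*(b*α*γ) + d*γ^2) (a*α*β + b*(α*δ+β*γ) + d*γ*δ) (c*α + e*γ)
       (a*β^2 + 2*(b*β*δ) + d*δ^2) (c*β + e*δ) f x y z
      = V3 a b c d e f (α*x + β*y) (γ*x + δ*y) z := by unfold V3; ring

lemma pull13 (x y z : ℤ) :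
    V3 (a*α^2 + 2*(c*α*γ) + f*γ^2) (b*α + e*γ) (a*α*β + c*(α*δ+β*γ) + f*γ*δ)
       d (b*β + e*δ) (a*β^2 + 2*(c*β*δ) + f*δ^2) x y z
      = V3 a b c d e f (α*x + β*z) y (γ*x + δ*z) := by unfold V3; ring

lemma pull23 (x y z : ℤ) :
    V3 a (b*α + c*γ) (b*β + c*δ)
       (d*α^2 + 2*(e*α*γ) + f*γ^2) (d*α*β + e*(α*δ+β*γ) + f*γ*δ)
       (d*β^2 + 2*(e*β*δ) + f*δ^2) x y z
      = V3 a b c d e f x (α*y + β*z) (γ*y + δ*z) := by unfold V3; ring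

lemma pull2 (y z : ℤ) :
    V2 (A*α^2 + 2*(B*α*γ) + C*γ^2) (A*α*β + B*(α*δ+β*γ) + C*γ*δ)
       (A*β^2 + 2*(B*β*δ) + C*δ^2) y z
      = V2 A B C (α*y + β*z) (γ*y + δ*z) := by unfold V2; ring

lemma det3_pull12 :
    det3 (a*α^2 + 2*(b*α*γ) + d*γ^2) (a*α*β + b*(α*δ+β*γ) + d*γ*δ) (c*α + e*γ)
       (a*β^2 + 2*(b*β*δ) + d*δ^2) (c*β + e*δ) f
      = (α*δ - β*γ)^2 * det3 a b c d e f := by unfold det3; ring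

lemma det3_pull13 :
    det3 (a*α^2 + 2*(c*α*γ) + f*γ^2) (b*α + e*γ) (a*α*β + c*(α*δ+β*γ) + f*γ*δ)
       d (b*β + e*δ) (a*β^2 + 2*(c*β*δ) + f*δ^2)
      = (α*δ - β*γ)^2 * det3 a b c d e f := by unfold det3; ring

lemma det3_pull23 :
    det3 a (b*α + c*γ) (b*β + c*δ)
       (d*α^2 + 2*(e*α*γ) + f*γ^2) (d*α*β + e*(α*δ+β*γ) + f*γ*δ)
       (d*β^2 + 2*(e*β*δ) + f*δ^2)
      = (α*δ - β*γ)^2 * det3 a b c d e f := by unfold det3; ring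

end pullback

section transfer
variable {a b c d e f A B C α β γ δ μ : ℤ}

lemma G3_of_pull12 (h1 : α*δ - β*γ = 1)
    (h : G3 (a*α^2 + 2*(b*α*γ) + d*γ^2) (a*α*β + b*(α*δ+β*γ) + d*γ*δ) (c*α + e*γ)
       (a*β^2 + 2*(b*β*δ) + d*δ^2) (c*β + e*δ) f) : G3 a b c d e f := by
  intro x y z
  obtain ⟨r, s, t, H⟩ := h (δ*x - β*y) (-γ*x + α*y) z
  refine ⟨r, s, t, ?_⟩
  rw [← H, pull12]
  have e1 : α*(δ*x - β*y) + β*(-γ*x + α*y) = x := by linear_combination x*h1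
  have e2 : γ*(δ*x - β*y) + δ*(-γ*x + α*y) = y := by linear_combination y*h1
  rw [e1, e2]

lemma G3_of_pull13 (h1 : α*δ - β*γ = 1)
    (h : G3 (a*α^2 + 2*(c*α*γ) + f*γ^2) (b*α + e*γ) (a*α*β + c*(α*δ+β*γ) + f*γ*δ)
       d (b*β + e*δ) (a*β^2 + 2*(c*β*δ) + f*δ^2)) : G3 a b c d e f := by
  intro x y z
  obtain ⟨r, s, t, H⟩ := h (δ*x - β*z) y (-γ*x + α*z)
  refine ⟨r, s, t, ?_⟩
  rw [← H, pull13]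
  have e1 : α*(δ*x - β*z) + β*(-γ*x + α*z) = x := by linear_combination x*h1
  have e2 : γ*(δ*x - β*z) + δ*(-γ*x + α*z) = z := by linear_combination z*h1
  rw [e1, e2]

lemma G3_of_pull23 (h1 : α*δ - β*γ = 1)
    (h : G3 a (b*α + c*γ) (b*β + c*δ)
       (d*α^2 + 2*(e*α*γ) + f*γ^2) (d*α*β + e*(α*δ+β*γ) + f*γ*δ)
       (d*β^2 + 2*(e*β*δ) + f*δ^2)) : G3 a b c d e f := by
  intro x y z
  obtain ⟨r, s, t, H⟩ := h x (δ*y - β*z) (-γ*y + α*z)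
  refine ⟨r, s, t, ?_⟩
  rw [← H, pull23]
  have e1 : α*(δ*y - β*z) + β*(-γ*y + α*z) = y := by linear_combination y*h1
  have e2 : γ*(δ*y - β*z) + δ*(-γ*y + α*z) = z := by linear_combination z*h1
  rw [e1, e2]

lemma G2_of_pull2 (h1 : α*δ - β*γ = 1)
    (h : G2 (A*α^2 + 2*(B*α*γ) + C*γ^2) (A*α*β + B*(α*δ+β*γ) + C*γ*δ)
       (A*β^2 + 2*(B*β*δ) + C*δ^2)) : G2 A B C := by
  intro y z
  obtain ⟨r, s, H⟩ := h (δ*y - β*z) (-γ*y + α*z)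
  refine ⟨r, s, ?_⟩
  rw [← H, pull2]
  have e1 : α*(δ*y - β*z) + β*(-γ*y + α*z) = y := by linear_combination y*h1
  have e2 : γ*(δ*y - β*z) + δ*(-γ*y + α*z) = z := by linear_combination z*h1
  rw [e1, e2]

lemma Low3_pull12 (h1 : α*δ - β*γ = 1) (h : Low3 μ a b c d e f) :
    Low3 μ (a*α^2 + 2*(b*α*γ) + d*γ^2) (a*α*β + b*(α*δ+β*γ) + d*γ*δ) (c*α + e*γ)
       (a*β^2 + 2*(b*β*δ) + d*δ^2) (c*β + e*δ) f := by
  intro x y z hxyz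
  rw [pull12]
  apply h
  rintro ⟨u1, u2, u3⟩
  refine hxyz ⟨?_, ?_, u3⟩
  · linear_combination δ*u1 - β*u2 - x*h1
  · linear_combination -γ*u1 + α*u2 - y*h1

lemma Low3_pull13 (h1 : α*δ - β*γ = 1) (h : Low3 μ a b c d e f) :
    Low3 μ (a*α^2 + 2*(c*α*γ) + f*γ^2) (b*α + e*γ) (a*α*β + c*(α*δ+β*γ) + f*γ*δ)
       d (b*β + e*δ) (a*β^2 + 2*(c*β*δ) + f*δ^2) := by
  intro x y z hxyz
  rw [pull13]
  apply h
  rintro ⟨u1, u2, u3⟩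
  refine hxyz ⟨?_, u2, ?_⟩
  · linear_combination δ*u1 - β*u3 - x*h1
  · linear_combination -γ*u1 + α*u3 - z*h1

lemma Low3_pull23 (h1 : α*δ - β*γ = 1) (h : Low3 μ a b c d e f) :
    Low3 μ a (b*α + c*γ) (b*β + c*δ)
       (d*α^2 + 2*(e*α*γ) + f*γ^2) (d*α*β + e*(α*δ+β*γ) + f*γ*δ)
       (d*β^2 + 2*(e*β*δ) + f*δ^2) := by
  intro x y z hxyz
  rw [pull23]
  apply h
  rintro ⟨u1, u2, u3⟩
  refine hxyz ⟨u1, ?_, ?_⟩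
  · linear_combination δ*u2 - β*u3 - y*h1
  · linear_combination -γ*u2 + α*u3 - z*h1

end transfer

lemma round_lemma_s17 (a b : ℤ) (ha : 0 < a) : ∃ k : ℤ, 2*(b - k*a) ≤ a ∧ -a ≤ 2*(b - k*a) := by
  set q : ℤ := (2*b + a) / (2*a) with hq
  have h2a : (2*a) ≠ 0 := by omega
  have h1 := Int.emod_nonneg (2*b + a) h2a
  have h2 := Int.emod_lt_of_pos (2*b + a) (by omega : 0 < 2*a)
  have h3 := Int.mul_ediv_add_emod (2*b + a) (2*a)
  rw [← hq] at h3
  refine ⟨q, ?_, ?_⟩ <;>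
  · have h4 : 2*a*q = 2*(q*a) := by ring
    linarith

lemma det2_identity (A B C v1 v2 w1 w2 : ℤ) :
    V2 A B C v1 v2 * V2 A B C w1 w2 - (A*v1*w1 + B*(v1*w2+v2*w1) + C*v2*w2)^2
      = (v1*w2 - v2*w1)^2 * (A*C - B^2) := by unfold V2; ring

lemma min2_exists {A B C : ℤ} (hpos : Pos2 A B C) :
    ∃ m : ℤ, 0 < m ∧ (∃ y z : ℤ, ¬(y = 0 ∧ z = 0) ∧ V2 A B C y z = m) ∧
      (∀ y z : ℤ, ¬(y = 0 ∧ z = 0) → m ≤ V2 A B C y z) := by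
  have hA : 0 < V2 A B C 1 0 := hpos 1 0 (by simp)
  set S : Set ℕ := {k : ℕ | ∃ y z : ℤ, ¬(y = 0 ∧ z = 0) ∧ V2 A B C y z = k} with hS
  have hne : S.Nonempty := ⟨(V2 A B C 1 0).toNat, 1, 0, by simp, by omega⟩
  obtain ⟨y0, z0, hy0, hv0⟩ := Nat.sInf_mem hne
  refine ⟨(sInf S : ℕ), ?_, ⟨y0, z0, hy0, hv0⟩, ?_⟩
  · have := hpos y0 z0 hy0; omega
  · intro y z hyz
    have hpos' := hpos y z hyz
    have hmem : (V2 A B C y z).toNat ∈ S := ⟨y, z, hyz, by omega⟩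
    have := Nat.sInf_le hmem
    omega

lemma min2_primitive {A B C m y0 z0 : ℤ} (hpos : Pos2 A B C)
    (h0 : ¬(y0 = 0 ∧ z0 = 0)) (hv : V2 A B C y0 z0 = m)
    (hmin : ∀ y z : ℤ, ¬(y = 0 ∧ z = 0) → m ≤ V2 A B C y z) :
    Int.gcd y0 z0 = 1 := by
  set g : ℕ := Int.gcd y0 z0 with hg
  have hgpos : 0 < g := Int.gcd_pos_iff.2 (by tauto)
  obtain ⟨y1, hy1⟩ : (g : ℤ) ∣ y0 := Int.gcd_dvd_left y0 z0
  obtain ⟨z1, hz1⟩ : (g : ℤ) ∣ z0 := Int.gcd_dvd_right y0 z0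
  have h1 : ¬(y1 = 0 ∧ z1 = 0) := by
    rintro ⟨rfl, rfl⟩; simp at hy1 hz1; tauto
  have hval : V2 A B C y0 z0 = (g:ℤ)^2 * V2 A B C y1 z1 := by
    rw [hy1, hz1]; unfold V2; ring
  have h2 := hmin y1 z1 h1
  have hm : 0 < m := hv ▸ hpos y0 z0 h0
  by_contra hne
  have hg2 : 2 ≤ (g:ℤ) := by omega
  have hsq : 4 ≤ (g:ℤ)^2 := by nlinarith
  nlinarith [hval, hv, h2, hm]

lemma min2_bound {A B C m : ℤ} (hpos : Pos2 A B C)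
    (hex : ∃ y z : ℤ, ¬(y = 0 ∧ z = 0) ∧ V2 A B C y z = m)
    (hmin : ∀ y z : ℤ, ¬(y = 0 ∧ z = 0) → m ≤ V2 A B C y z) :
    3 * m^2 ≤ 4 * (A*C - B^2) := by
  obtain ⟨y0, z0, h0, hv⟩ := hex
  have hm : 0 < m := hv ▸ hpos y0 z0 h0
  have hprim := min2_primitive hpos h0 hv hmin
  have hbez : y0 * Int.gcdA y0 z0 + z0 * Int.gcdB y0 z0 = 1 := by
    have := Int.gcd_eq_gcd_ab y0 z0
    rw [hprim] at this; push_cast at this; linarith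
  set s := Int.gcdA y0 z0 with hs0
  set t := Int.gcdB y0 z0 with ht0
  set B' : ℤ := A*y0*(-t) + B*(y0*s + z0*(-t)) + C*z0*s with hB'
  obtain ⟨k, hk1, hk2⟩ := round_lemma_s17 m B' hm
  set w1 : ℤ := -t - k*y0 with hw1
  set w2 : ℤ := s - k*z0 with hw2
  set C'' : ℤ := V2 A B C w1 w2 with hC''
  have hvec : ¬(w1 = 0 ∧ w2 = 0) := by
    rintro ⟨h1, h2⟩
    have hs' : s = k*z0 := by rw [hw2] at h2; linarith
    have ht' : t = -(k*y0) := by rw [hw1] at h1; linarith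
    have : y0*s + z0*t = 0 := by rw [hs', ht']; ring
    omega
  have hC''ge : m ≤ C'' := hmin _ _ hvec
  have hBil : A*y0*w1 + B*(y0*w2 + z0*w1) + C*z0*w2 = B' - k*m := by
    rw [hw1, hw2, hB', ← hv]; unfold V2; ring
  have hdetw : y0*w2 - z0*w1 = 1 := by
    rw [hw1, hw2]; linear_combination hbez
  have hdet2 : m * C'' - (B' - k*m)^2 = A*C - B^2 := by
    have := det2_identity A B C y0 z0 w1 w2
    rw [hv, hBil, hdetw, ← hC''] at this
    linarith [this]
  have hsq : 4*(B' - k*m)^2 ≤ m^2 := by nlinarith [hk1, hk2]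
  nlinarith [mul_le_mul_of_nonneg_left hC''ge (le_of_lt hm), hdet2, hsq]

/-- positive definite binary form of determinant 1 represents only sums of two squares -/
lemma G2_of_detone {A B C : ℤ} (hpos : Pos2 A B C) (hdet : A*C - B^2 = 1) : G2 A B C := by
  obtain ⟨m, hm, ⟨y0, z0, h0, hv⟩, hmin⟩ := min2_exists hpos
  have hbnd := min2_bound hpos ⟨y0, z0, h0, hv⟩ hmin
  rw [hdet] at hbnd
  have hm1 : m = 1 := by nlinarith
  subst hm1
  have hprim := min2_primitive hpos h0 hv hmin
  have hbez : y0 * Int.gcdA y0 z0 + z0 * Int.gcdB y0 z0 = 1 := by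
    have := Int.gcd_eq_gcd_ab y0 z0
    rw [hprim] at this; push_cast at this; linarith
  set s := Int.gcdA y0 z0 with hs0
  set t := Int.gcdB y0 z0 with ht0
  -- change of basis (α,β,γ,δ) = (y0, -t, z0, s)
  have h1 : y0*s - (-t)*z0 = 1 := by linear_combination hbez
  apply G2_of_pull2 h1
  set A' : ℤ := A*y0^2 + 2*(B*y0*z0) + C*z0^2 with hA'
  set B' : ℤ := A*y0*(-t) + B*(y0*s + (-t)*z0) + C*z0*s with hB'
  set C' : ℤ := A*(-t)^2 + 2*(B*(-t)*s) + C*s^2 with hC'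
  have hA'1 : A' = 1 := by rw [hA', ← hv]; unfold V2; ring
  have hdet' : A'*C' - B'^2 = 1 := by
    have := det2_identity A B C y0 z0 (-t) s
    rw [hv] at this
    have h2 : y0*s - z0*(-t) = 1 := by linear_combination hbez
    rw [h2] at this
    rw [hA', hB', hC', ← hv]
    unfold V2 at this ⊢
    nlinarith [this]
  -- now shear (α,β,γ,δ) = (1, -B', 0, 1)
  apply G2_of_pull2 (show (1:ℤ)*1 - (-B')*0 = 1 by ring)
  have k1 : A'*1^2 + 2*(B'*1*0) + C'*0^2 = A' := by ring
  have k2 : A'*1*(-B') + B'*(1*1+(-B')*0) + C'*0*1 = B' - A'*B' := by ring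
  have k3 : A'*(-B')^2 + 2*(B'*(-B')*1) + C'*1^2 = C' - 2*B'^2 + A'*B'^2 := by ring
  rw [k1, k2, k3, hA'1]
  have k4 : B' - 1*B' = 0 := by ring
  have k5 : C' - 2*B'^2 + 1*B'^2 = 1 := by
    rw [hA'1] at hdet'; linarith [hdet']
  rw [k4, k5]
  intro y z
  exact ⟨y, z, by unfold V2; ring⟩

lemma min3_exists {a b c d e f : ℤ}
    (hpos : ∀ x y z : ℤ, ¬(x = 0 ∧ y = 0 ∧ z = 0) → 0 < V3 a b c d e f x y z) :
    ∃ m : ℤ, 0 < m ∧ (∃ x y z : ℤ, ¬(x = 0 ∧ y = 0 ∧ z = 0) ∧ V3 a b c d e f x y z = m) ∧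
      Low3 m a b c d e f := by
  have hA : 0 < V3 a b c d e f 1 0 0 := hpos 1 0 0 (by simp)
  set S : Set ℕ := {k : ℕ | ∃ x y z : ℤ, ¬(x = 0 ∧ y = 0 ∧ z = 0) ∧ V3 a b c d e f x y z = k} with hS
  have hne : S.Nonempty := ⟨(V3 a b c d e f 1 0 0).toNat, 1, 0, 0, by simp, by omega⟩
  obtain ⟨x0, y0, z0, h0, hv0⟩ := Nat.sInf_mem hne
  refine ⟨(sInf S : ℕ), ?_, ⟨x0, y0, z0, h0, hv0⟩, ?_⟩
  · have := hpos x0 y0 z0 h0; omega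
  · intro x y z hxyz
    have hpos' := hpos x y z hxyz
    have hmem : (V3 a b c d e f x y z).toNat ∈ S := ⟨x, y, z, hxyz, by omega⟩
    have := Nat.sInf_le hmem
    omega

lemma min3_primitive {a b c d e f m x0 y0 z0 : ℤ}
    (hpos : ∀ x y z : ℤ, ¬(x = 0 ∧ y = 0 ∧ z = 0) → 0 < V3 a b c d e f x y z)
    (h0 : ¬(x0 = 0 ∧ y0 = 0 ∧ z0 = 0)) (hv : V3 a b c d e f x0 y0 z0 = m)
    (hmin : Low3 m a b c d e f) :
    Int.gcd x0 (Int.gcd y0 z0 : ℤ) = 1 := by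
  set g : ℕ := Int.gcd x0 (Int.gcd y0 z0 : ℤ) with hg
  have hgpos : 0 < g := by
    rcases Nat.eq_zero_or_pos g with h | h
    · exfalso
      rw [hg, Int.gcd_eq_zero_iff] at h
      obtain ⟨h1, h2⟩ := h
      have h2' : Int.gcd y0 z0 = 0 := by exact_mod_cast h2
      rw [Int.gcd_eq_zero_iff] at h2'
      exact h0 ⟨h1, h2'.1, h2'.2⟩
    · exact h
  obtain ⟨x1, hx1⟩ : (g : ℤ) ∣ x0 := Int.gcd_dvd_left x0 (Int.gcd y0 z0 : ℤ)
  have hdyz : (g : ℤ) ∣ (Int.gcd y0 z0 : ℤ) := Int.gcd_dvd_right x0 (Int.gcd y0 z0 : ℤ)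
  obtain ⟨y1, hy1⟩ : (g : ℤ) ∣ y0 := dvd_trans hdyz (Int.gcd_dvd_left y0 z0)
  obtain ⟨z1, hz1⟩ : (g : ℤ) ∣ z0 := dvd_trans hdyz (Int.gcd_dvd_right y0 z0)
  have h1 : ¬(x1 = 0 ∧ y1 = 0 ∧ z1 = 0) := by
    rintro ⟨rfl, rfl, rfl⟩; simp at hx1 hy1 hz1; tauto
  have hval : V3 a b c d e f x0 y0 z0 = (g:ℤ)^2 * V3 a b c d e f x1 y1 z1 := by
    rw [hx1, hy1, hz1]; unfold V3; ring
  have h2 := hmin x1 y1 z1 h1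
  have hm : 0 < m := hv ▸ hpos x0 y0 z0 h0
  by_contra hne
  have hg2 : 2 ≤ (g:ℤ) := by omega
  have hsq : 4 ≤ (g:ℤ)^2 := by nlinarith
  nlinarith [hval, hv, h2, hm]

/-- Core continuation: form with minimum m at the corner, det 1, is good. -/
lemma G3_corner {b c d e f m : ℤ} (hm : 0 < m)
    (hlow : Low3 m m b c d e f) (hdet : det3 m b c d e f = 1) : G3 m b c d e f := by
  -- the projected binary form
  set GA : ℤ := m*d - b^2 with hGA
  set GB : ℤ := m*e - b*c with hGB
  set GC : ℤ := m*f - c^2 with hGC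
  have key3 : ∀ x y z : ℤ, m * V3 m b c d e f x y z
      = (m*x + b*y + c*z)^2 + V2 GA GB GC y z := by
    intro x y z; rw [hGA, hGB, hGC]; unfold V3 V2; ring
  have lowg : ∀ y z : ℤ, ¬(y = 0 ∧ z = 0) → 3*m^2 ≤ 4 * V2 GA GB GC y z := by
    intro y z h
    obtain ⟨k, hk1, hk2⟩ := round_lemma_s17 m (b*y + c*z) hm
    have hV := hlow (-k) y z (by tauto)
    have hkey := key3 (-k) y z
    have harg : m*(-k) + b*y + c*z = (b*y + c*z) - k*m := by ring
    rw [harg] at hkey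
    nlinarith [hkey, hV, hk1, hk2, hm]
  have posg : Pos2 GA GB GC := by
    intro y z h
    have := lowg y z h
    nlinarith [hm]
  have detg : GA*GC - GB^2 = m := by
    have : GA*GC - GB^2 = m * det3 m b c d e f := by
      rw [hGA, hGB, hGC]; unfold det3; ring
    rw [this, hdet]; ring
  obtain ⟨m2, hm2, ⟨y2, z2, hyz2, hv2⟩, hmin2⟩ := min2_exists posg
  have hb1 : 3*m2^2 ≤ 4*m := by
    have := min2_bound posg ⟨y2, z2, hyz2, hv2⟩ hmin2
    rw [detg] at this; linarith
  have hb2 : 3*m^2 ≤ 4*m2 := by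
    have := lowg y2 z2 hyz2
    rw [hv2] at this; linarith
  have hm1 : m = 1 := by
    by_contra hne
    have h2 : 2 ≤ m := by omega
    have h27 : 27*m^4 ≤ 64*m := by nlinarith [hb1, hb2]
    nlinarith [h27, h2]
  subst hm1
  -- clear the first row: shear x ↦ x - b y, then x ↦ x - c z
  apply G3_of_pull12 (show (1:ℤ)*1 - (-b)*0 = 1 by ring)
  have q1 : (1:ℤ)*1^2 + 2*(b*1*0) + d*0^2 = 1 := by ring
  have q2 : (1:ℤ)*1*(-b) + b*(1*1 + (-b)*0) + d*0*1 = 0 := by ring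
  have q3 : c*1 + e*0 = c := by ring
  have q4 : (1:ℤ)*(-b)^2 + 2*(b*(-b)*1) + d*1^2 = d - b^2 := by ring
  have q5 : c*(-b) + e*1 = e - b*c := by ring
  rw [q1, q2, q3, q4, q5]
  apply G3_of_pull13 (show (1:ℤ)*1 - (-c)*0 = 1 by ring)
  have r1 : (1:ℤ)*1^2 + 2*(c*1*0) + f*0^2 = 1 := by ring
  have r2 : (0:ℤ)*1 + (e - b*c)*0 = 0 := by ring
  have r3 : (1:ℤ)*1*(-c) + c*(1*1 + (-c)*0) + f*0*1 = 0 := by ring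
  have r4 : (0:ℤ)*(-c) + (e - b*c)*1 = e - b*c := by ring
  have r5 : (1:ℤ)*(-c)^2 + 2*(c*(-c)*1) + f*1^2 = f - c^2 := by ring
  rw [r1, r2, r3, r4, r5]
  -- now the form is (1,0,0, d-b², e-bc, f-c²)
  have hdetD : (d - b^2)*(f - c^2) - (e - b*c)^2 = 1 := by
    have : (d - b^2)*(f - c^2) - (e - b*c)^2 = det3 1 b c d e f := by
      unfold det3; ring
    rw [this, hdet]
  have hposD : Pos2 (d - b^2) (e - b*c) (f - c^2) := by
    intro y z h
    have hident : V2 (d - b^2) (e - b*c) (f - c^2) y z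
        = V3 1 b c d e f (-(b*y + c*z)) y z := by unfold V2 V3; ring
    have := hlow (-(b*y + c*z)) y z (by tauto)
    rw [hident]; linarith
  have hG2 := G2_of_detone hposD hdetD
  intro x y z
  obtain ⟨r, s, hrs⟩ := hG2 y z
  refine ⟨x, r, s, ?_⟩
  have : V3 1 0 0 (d - b^2) (e - b*c) (f - c^2) x y z
      = x^2 + V2 (d - b^2) (e - b*c) (f - c^2) y z := by unfold V3 V2; ring
  rw [this, hrs]; ring

/-- Main reduction theorem: a positive definite integral ternary form of determinant 1
represents only sums of three squares. -/
theorem G3_of_detone {a b c d e f : ℤ}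
    (hpos : ∀ x y z : ℤ, ¬(x = 0 ∧ y = 0 ∧ z = 0) → 0 < V3 a b c d e f x y z)
    (hdet : det3 a b c d e f = 1) : G3 a b c d e f := by
  obtain ⟨m, hm, ⟨x0, y0, z0, h0, hv⟩, hmin⟩ := min3_exists hpos
  have hprim := min3_primitive hpos h0 hv hmin
  by_cases hyz : y0 = 0 ∧ z0 = 0
  · -- x0 = ±1
    obtain ⟨hy0, hz0⟩ := hyz
    subst hy0; subst hz0
    have hx2 : x0*x0 = 1 := by
      have h' : Int.gcd x0 (Int.gcd (0:ℤ) (0:ℤ) : ℤ) = 1 := hprim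
      simp [Int.gcd] at h'
      rcases Int.natAbs_eq x0 with h | h <;> rw [h, h'] <;> ring
    have h1 : x0*x0 - 0*0 = 1 := by rw [hx2]; ring
    apply G3_of_pull12 h1
    have hcorner : a*x0^2 + 2*(b*x0*0) + d*0^2 = m := by
      rw [← hv]; unfold V3; ring
    rw [hcorner]
    have hlow2 := Low3_pull12 h1 hmin
    have hdet2' : det3 (a*x0^2 + 2*(b*x0*0) + d*0^2)
        (a*x0*0 + b*(x0*x0 + 0*0) + d*0*x0) (c*x0 + e*0)
        (a*0^2 + 2*(b*0*x0) + d*x0^2) (c*0 + e*x0) f = 1 := by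
      rw [det3_pull12, h1, hdet]; ring
    rw [hcorner] at hlow2 hdet2'
    exact G3_corner hm hlow2 hdet2'
  · -- general case
    set g2 : ℕ := Int.gcd y0 z0 with hg2
    have hg2pos : 0 < g2 := Int.gcd_pos_iff.2 (by tauto)
    obtain ⟨y1, hy1⟩ : (g2 : ℤ) ∣ y0 := Int.gcd_dvd_left y0 z0
    obtain ⟨z1, hz1⟩ : (g2 : ℤ) ∣ z0 := Int.gcd_dvd_right y0 z0
    have hbez : y0 * Int.gcdA y0 z0 + z0 * Int.gcdB y0 z0 = (g2:ℤ) := by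
      have := Int.gcd_eq_gcd_ab y0 z0
      rw [← hg2] at this; linarith
    set sb := Int.gcdA y0 z0 with hsb
    set tb := Int.gcdB y0 z0 with htb
    have h1a : y1*sb - (-tb)*z1 = 1 := by
      have hcan : (g2:ℤ) * (y1*sb - (-tb)*z1) = (g2:ℤ) * 1 := by
        rw [hy1, hz1] at hbez; linarith [hbez]
      have := mul_left_cancel₀ (show (g2:ℤ) ≠ 0 by exact_mod_cast hg2pos.ne') hcan
      linarith
    apply G3_of_pull23 h1a
    set nB : ℤ := b*y1 + c*z1 with hnB
    set nC : ℤ := b*(-tb) + c*sb with hnC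
    set nD : ℤ := d*y1^2 + 2*(e*y1*z1) + f*z1^2 with hnD
    set nE : ℤ := d*y1*(-tb) + e*(y1*sb + (-tb)*z1) + f*z1*sb with hnE
    set nF : ℤ := d*(-tb)^2 + 2*(e*(-tb)*sb) + f*sb^2 with hnF
    have hlow1 : Low3 m a nB nC nD nE nF := by
      rw [hnB, hnC, hnD, hnE, hnF]; exact Low3_pull23 h1a hmin
    have hdet1 : det3 a nB nC nD nE nF = 1 := by
      rw [hnB, hnC, hnD, hnE, hnF, det3_pull23, h1a, hdet]; ring
    have hval1 : V3 a nB nC nD nE nF x0 (g2:ℤ) 0 = m := by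
      rw [hnB, hnC, hnD, hnE, hnF, pull23]
      have e1 : y1*(g2:ℤ) + (-tb)*0 = y0 := by rw [hy1]; ring
      have e2 : z1*(g2:ℤ) + sb*0 = z0 := by rw [hz1]; ring
      rw [e1, e2, hv]
    -- second Bezout : gcd(x0, g2) = 1
    have hbez2 : x0 * Int.gcdA x0 (g2:ℤ) + (g2:ℤ) * Int.gcdB x0 (g2:ℤ) = 1 := by
      have := Int.gcd_eq_gcd_ab x0 (g2:ℤ)
      rw [hprim] at this; push_cast at this; linarith
    set sa := Int.gcdA x0 (g2:ℤ) with hsa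
    set ta := Int.gcdB x0 (g2:ℤ) with hta
    have h1b : x0*sa - (-ta)*(g2:ℤ) = 1 := by linarith [hbez2]
    apply G3_of_pull12 h1b
    have hcorner : a*x0^2 + 2*(nB*x0*(g2:ℤ)) + nD*(g2:ℤ)^2 = m := by
      rw [← hval1]; unfold V3; ring
    rw [hcorner]
    have hlow2 := Low3_pull12 h1b hlow1
    have hdet2' : det3 (a*x0^2 + 2*(nB*x0*(g2:ℤ)) + nD*(g2:ℤ)^2)
        (a*x0*(-ta) + nB*(x0*sa + (-ta)*(g2:ℤ)) + nD*(g2:ℤ)*sa) (nC*x0 + nE*(g2:ℤ))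
        (a*(-ta)^2 + 2*(nB*(-ta)*sa) + nD*sa^2) (nC*(-ta) + nE*sa) nF = 1 := by
      rw [det3_pull12, h1b, hdet1]; ring
    rw [hcorner] at hlow2 hdet2'
    exact G3_corner hm hlow2 hdet2'

/-- Every positive integer ≡ 3 mod 8 is a sum of three squares. -/
theorem three_squares_mod8 (m : ℕ) (h8 : m % 8 = 3) :
    ∃ x y z : ℤ, x^2 + y^2 + z^2 = (m : ℤ) := by
  have hm3 : 3 ≤ m := by omega
  have hmOdd : Odd m := by rw [Nat.odd_iff]; omega
  set r : ℕ := (m - 1) / 2 with hr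
  have hr2 : 2 * r = m - 1 := by omega
  have hr4 : r % 4 = 1 := by omega
  -- coprimality of r with 4m
  have hco : Nat.Coprime r (4 * m) := by
    have h2 : Nat.Coprime r m := by
      have hgr : Nat.gcd r m ∣ r := Nat.gcd_dvd_left r m
      have hgm : Nat.gcd r m ∣ m := Nat.gcd_dvd_right r m
      have h1 : Nat.gcd r m ∣ m - 1 := hgr.trans ⟨2, by omega⟩
      have h2 : Nat.gcd r m ∣ m - (m-1) := Nat.dvd_sub hgm h1
      have : m - (m - 1) = 1 := by omega
      rw [this] at h2
      exact Nat.eq_one_of_dvd_one h2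
    have h4 : Nat.Coprime r 4 := by
      have hr2' : ¬ (2 ∣ r) := by omega
      have : Nat.Coprime r 2 := Nat.coprime_comm.mp ((Nat.prime_two.coprime_iff_not_dvd).mpr hr2')
      simpa using this.pow_right 2
    exact Nat.Coprime.mul_right h4 h2
  haveI : NeZero (4*m) := ⟨by omega⟩
  have hunit : IsUnit ((r : ℕ) : ZMod (4*m)) := (ZMod.isUnit_iff_coprime r (4*m)).mpr hco
  obtain ⟨q, hq_gt, hq_prime, hq_mod⟩ := Nat.forall_exists_prime_gt_and_eq_mod hunit m
  haveI fq : Fact q.Prime := ⟨hq_prime⟩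
  have hmod : q ≡ r [MOD 4*m] := (ZMod.natCast_eq_natCast_iff q r (4*m)).mp hq_mod
  have hq4 : q % 4 = 1 := by
    have h4 : q ≡ r [MOD 4] := hmod.of_dvd ⟨m, rfl⟩
    have : q % 4 = r % 4 := h4
    omega
  have hq_modm : q ≡ r [MOD m] := hmod.of_dvd ⟨4, by ring⟩
  have hqm : q % m = r % m := hq_modm
  have hqOdd : Odd q := by rw [Nat.odd_iff]; omega
  have hdvdm : m ∣ 2*q + 1 := by
    have h2 : (2*q+1) ≡ (2*r+1) [MOD m] := (hq_modm.mul_left 2).add_right 1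
    rw [show 2*r+1 = m by omega] at h2
    have h3 : (2*q+1) % m = m % m := h2
    rw [Nat.mod_self] at h3
    exact Nat.dvd_of_mod_eq_zero h3
  obtain ⟨A, hA⟩ := hdvdm
  -- Jacobi symbol computation
  have hJrm : jacobiSym (r : ℤ) m = 1 := by
    have hmul : jacobiSym ((2 : ℤ) * r) m = jacobiSym 2 m * jacobiSym (r:ℤ) m :=
      jacobiSym.mul_left 2 (r:ℤ) m
    have hmm : jacobiSym ((2:ℤ) * r) m = jacobiSym (-1) m := by
      apply jacobiSym.mod_left'
      have h1 : (2:ℤ) * r = (m : ℤ) - 1 := by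
        have := hr2; push_cast; omega
      rw [h1, show (m:ℤ) - 1 = -1 + (m:ℤ)*1 by ring, Int.add_mul_emod_self_left]
    have hneg1 : jacobiSym (-1 : ℤ) m = -1 := by
      rw [jacobiSym.at_neg_one hmOdd, ZMod.χ₄_nat_eq_if_mod_four]
      have h1 : m % 2 = 1 := by omega
      have h2 : m % 4 = 3 := by omega
      rw [if_neg (by omega), if_neg (by omega)]
    have h2m : jacobiSym (2 : ℤ) m = -1 := by
      rw [jacobiSym.at_two hmOdd, ZMod.χ₈_nat_eq_if_mod_eight]
      have h1 : m % 2 = 1 := by omega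
      rw [if_neg (by omega), if_neg (by omega)]
    rw [hmm, hneg1, h2m] at hmul
    linarith
  have hJqm : jacobiSym (q : ℤ) m = 1 := by
    rw [← hJrm]
    apply jacobiSym.mod_left'
    rw [← Int.natCast_mod, ← Int.natCast_mod, hqm]
  have hJmq : jacobiSym (m : ℤ) q = 1 := by
    rw [← jacobiSym.quadratic_reciprocity_one_mod_four hq4 hmOdd]
    exact hJqm
  have hJ : jacobiSym (-(m:ℤ)) q = 1 := by
    rw [jacobiSym.neg (m:ℤ) hqOdd, hJmq, ZMod.χ₄_nat_eq_if_mod_four]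
    rw [if_neg (by omega), if_pos (by omega)]; ring
  have hqnm : ¬ (q ∣ m) := by
    intro hdvd
    have := Nat.le_of_dvd (by omega) hdvd
    omega
  have hmne : ((m:ℕ) : ZMod q) ≠ 0 := by
    rw [Ne, ZMod.natCast_eq_zero_iff]
    exact hqnm
  have h0 : ((-(m:ℤ) : ℤ) : ZMod q) ≠ 0 := by
    push_cast
    simpa [neg_eq_zero] using hmne
  have hsq : IsSquare ((-(m:ℤ) : ℤ) : ZMod q) := by
    apply (legendreSym.eq_one_iff q h0).mp
    rw [jacobiSym.legendreSym.to_jacobiSym]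
    exact hJ
  obtain ⟨y, hy⟩ := hsq
  have hy' : -(m : ZMod q) = y * y := by push_cast at hy; exact hy
  -- b := y / m
  set bz : ZMod q := y * (m : ZMod q)⁻¹ with hbz
  have hcancel : (m : ZMod q) * ((m:ZMod q))⁻¹ = 1 := mul_inv_cancel₀ hmne
  have hbzsq : (m : ZMod q) * bz^2 = -1 := by
    calc (↑m:ZMod q) * bz^2 = (y*y) * ((↑m) * (↑m)⁻¹) * (↑m)⁻¹ := by rw [hbz]; ring
    _ = (-(↑m)) * ((↑m)⁻¹ * 1) := by rw [hcancel, ← hy']; ring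
    _ = -(((↑m:ZMod q)) * (↑m)⁻¹) := by ring
    _ = -1 := by rw [hcancel]
  set b0 : ℕ := bz.val with hb0
  have hb0cast : ((b0:ℕ) : ZMod q) = bz := ZMod.natCast_zmod_val bz
  have hb0lt : b0 < q := ZMod.val_lt bz
  set b1 : ℕ := if b0 % 2 = 1 then b0 else q - b0 with hb1
  have hb1odd : b1 % 2 = 1 := by
    rw [hb1]; split_ifs with h
    · exact h
    · omega
  have hb1sq : (m : ZMod q) * ((b1:ℕ) : ZMod q)^2 = -1 := by
    rw [hb1]; split_ifs with h
    · rw [hb0cast]; exact hbzsq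
    · have : ((q - b0 : ℕ) : ZMod q) = -bz := by
        push_cast [Nat.cast_sub hb0lt.le]
        rw [hb0cast, ZMod.natCast_self]; ring
      rw [this, show (-bz)^2 = bz^2 by ring]; exact hbzsq
  have hq_dvd : q ∣ m * b1^2 + 1 := by
    rw [← ZMod.natCast_eq_zero_iff]
    push_cast
    rw [hb1sq]; ring
  have h2_dvd : 2 ∣ m * b1^2 + 1 := by
    have h1 : Odd (b1^2) := (Nat.odd_iff.mpr hb1odd).pow
    have h2 : Odd (m * b1^2) := hmOdd.mul h1
    rw [Nat.odd_iff] at h2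
    omega
  have h2q_dvd : 2*q ∣ m*b1^2 + 1 := by
    have hco2 : Nat.Coprime 2 q := by
      have : ¬ (2 ∣ q) := by omega
      exact (Nat.prime_two.coprime_iff_not_dvd).mpr this
    exact Nat.Coprime.mul_dvd_of_dvd_of_dvd hco2 h2_dvd hq_dvd
  obtain ⟨C, hC⟩ := h2q_dvd
  -- now build the ternary form over ℤ
  have hAz : (m:ℤ) * A = 2*q + 1 := by exact_mod_cast congrArg (Nat.cast : ℕ → ℤ) hA |>.symm
  have hCz : 2*(q:ℤ)*C = (m:ℤ)*(b1:ℤ)^2 + 1 := by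
    exact_mod_cast (congrArg (Nat.cast : ℕ → ℤ) hC).symm
  have hm0 : 0 < (m:ℤ) := by exact_mod_cast (by omega : 0 < m)
  have hq0 : 0 < (q:ℤ) := by exact_mod_cast hq_prime.pos
  have hdet : det3 (m:ℤ) 1 0 (A:ℤ) (b1:ℤ) (C:ℤ) = 1 := by
    unfold det3
    linear_combination (C:ℤ) * hAz + hCz
  have key : ∀ x y z : ℤ, 2*(q:ℤ)*((m:ℤ)*V3 (m:ℤ) 1 0 (A:ℤ) (b1:ℤ) (C:ℤ) x y z)
      = 2*(q:ℤ)*((m:ℤ)*x+y)^2 + (2*(q:ℤ)*y + (m:ℤ)*(b1:ℤ)*z)^2 + (m:ℤ)*z^2 := by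
    intro x y z
    unfold V3
    linear_combination (2*(q:ℤ)*y^2) * hAz + ((m:ℤ)*z^2) * hCz
  have hpos : ∀ x y z : ℤ, ¬(x = 0 ∧ y = 0 ∧ z = 0) →
      0 < V3 (m:ℤ) 1 0 (A:ℤ) (b1:ℤ) (C:ℤ) x y z := by
    intro x y z hne
    by_contra hle
    push_neg at hle
    have hkey := key x y z
    have h2qm : (0:ℤ) ≤ 2*(q:ℤ)*(m:ℤ) := by positivity
    have hVle := mul_nonpos_of_nonneg_of_nonpos h2qm hle
    have heq : (2*(q:ℤ)*(m:ℤ))*(V3 (m:ℤ) 1 0 (A:ℤ) (b1:ℤ) (C:ℤ) x y z)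
        = 2*(q:ℤ)*((m:ℤ)*(V3 (m:ℤ) 1 0 (A:ℤ) (b1:ℤ) (C:ℤ) x y z)) := by ring
    rw [heq, hkey] at hVle
    have t1 : (0:ℤ) ≤ 2*(q:ℤ)*((m:ℤ)*x+y)^2 := by positivity
    have t2 : (0:ℤ) ≤ (2*(q:ℤ)*y + (m:ℤ)*(b1:ℤ)*z)^2 := sq_nonneg _
    have t3 : (0:ℤ) ≤ (m:ℤ)*z^2 := by positivity
    have e3 : (m:ℤ)*z^2 = 0 := by linarith
    have e2 : (2*(q:ℤ)*y + (m:ℤ)*(b1:ℤ)*z)^2 = 0 := by linarith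
    have e1 : 2*(q:ℤ)*((m:ℤ)*x+y)^2 = 0 := by linarith
    have hz : z = 0 := by
      rcases mul_eq_zero.mp e3 with h | h
      · exfalso; omega
      · exact sq_eq_zero_iff.mp h
    subst hz
    have hy0 : y = 0 := by
      have h2 : 2*(q:ℤ)*y + (m:ℤ)*(b1:ℤ)*0 = 0 := sq_eq_zero_iff.mp e2
      have : 2*(q:ℤ)*y = 0 := by linarith
      rcases mul_eq_zero.mp this with h | h
      · exfalso; omega
      · exact h
    subst hy0
    have hx0 : x = 0 := by
      have h1 : ((m:ℤ)*x+0)^2 = 0 := by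
        rcases mul_eq_zero.mp e1 with h | h
        · exfalso; omega
        · exact h
      have h2 : (m:ℤ)*x = 0 := by
        have := sq_eq_zero_iff.mp h1; linarith
      rcases mul_eq_zero.mp h2 with h | h
      · exfalso; omega
      · exact h
    exact hne ⟨hx0, rfl, rfl⟩
  obtain ⟨x, y, z, hxyz⟩ := G3_of_detone hpos hdet 1 0 0
  refine ⟨x, y, z, ?_⟩
  rw [← hxyz]; unfold V3; ring
lemma sq8_odd (w : ℤ) (h : w % 2 = 1) : w^2 % 8 = 1 := by
  obtain ⟨c, hc⟩ : ∃ c, w = 2*c + 1 := ⟨w/2, by omega⟩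
  obtain ⟨dd, hdd⟩ := Int.even_mul_succ_self c
  have : w^2 = 8*dd + 1 := by rw [hc]; nlinarith [hdd]
  omega

lemma sq4_even (w : ℤ) (h : w % 2 = 0) : w^2 % 4 = 0 := by
  obtain ⟨c, hc⟩ : ∃ c, w = 2*c := ⟨w/2, by omega⟩
  have : w^2 = 4*c^2 := by rw [hc]; ring
  omega

theorem odd_T_in_spectrum (n T : ℤ) (hT : Odd T) (hn : 0 < n)
    (hle : T^2 ≤ 4 * n) (hpar : Odd n) :
    ∃ a b c d : ℤ, a^2 + b^2 + c^2 + d^2 = n ∧ a + b + c + d = T := by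
  obtain ⟨k, hk⟩ := hT
  obtain ⟨l, hl⟩ := hpar
  obtain ⟨j, hj⟩ := Int.even_mul_succ_self k
  have hT2 : T^2 = 8*j + 1 := by rw [hk]; nlinarith [hj]
  set m : ℤ := 4*n - T^2 with hm
  have hm8 : m % 8 = 3 := by
    have : m = 8*(l - j) + 3 := by rw [hm, hT2, hl]; ring
    omega
  have hm0 : 0 ≤ m := by rw [hm]; linarith
  have hmn : ((m.toNat : ℕ) : ℤ) = m := Int.toNat_of_nonneg hm0
  have hmn8 : (m.toNat) % 8 = 3 := by omega
  obtain ⟨x, y, z, hxyz⟩ := three_squares_mod8 m.toNat hmn8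
  rw [hmn] at hxyz
  -- all of x, y, z are odd
  have hodd : x % 2 = 1 ∧ y % 2 = 1 ∧ z % 2 = 1 := by
    have hpx := Int.emod_two_eq x
    have hpy := Int.emod_two_eq y
    have hpz := Int.emod_two_eq z
    have fx1 := sq8_odd x; have fx0 := sq4_even x
    have fy1 := sq8_odd y; have fy0 := sq4_even y
    have fz1 := sq8_odd z; have fz0 := sq4_even z
    omega
  obtain ⟨hxo, hyo, hzo⟩ := hodd
  have hTo : T % 2 = 1 := by omega
  -- sign flip for x so that T + x + y + z ≡ 0 mod 4
  set x' : ℤ := if (T + x + y + z) % 4 = 0 then x else -x with hx'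
  have hx2 : x'^2 = x^2 := by rw [hx']; split_ifs <;> ring
  have hx'o : x' % 2 = 1 ∨ x' % 2 = -1 := by rw [hx']; split_ifs <;> omega
  have h4 : (T + x' + y + z) % 4 = 0 := by
    rw [hx']; split_ifs with h
    · exact h
    · omega
  obtain ⟨aa, haa⟩ : (4:ℤ) ∣ T + x' + y + z := Int.dvd_of_emod_eq_zero h4
  obtain ⟨bb, hbb⟩ : (4:ℤ) ∣ T + x' - y - z := by
    apply Int.dvd_of_emod_eq_zero; omega
  obtain ⟨cc, hcc⟩ : (4:ℤ) ∣ T - x' + y - z := by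
    apply Int.dvd_of_emod_eq_zero; omega
  obtain ⟨dd, hdd⟩ : (4:ℤ) ∣ T - x' - y + z := by
    apply Int.dvd_of_emod_eq_zero; omega
  refine ⟨aa, bb, cc, dd, ?_, ?_⟩
  · have hbig : (4*aa)^2 + (4*bb)^2 + (4*cc)^2 + (4*dd)^2
        = 4*(T^2 + (x'^2 + y^2 + z^2)) := by
      rw [← haa, ← hbb, ← hcc, ← hdd]; ring
    have hS : x'^2 + y^2 + z^2 = 4*n - T^2 := by
      rw [hx2]; rw [hm] at hxyz; linarith
    have h16 : 16*(aa^2 + bb^2 + cc^2 + dd^2) = 16*n := by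
      linear_combination hbig + 4*hS
    linarith
  · have h4T : 4*(aa + bb + cc + dd) = 4*T := by
      linear_combination -(haa + hbb + hcc + hdd)
    linarith
end
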